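/- arXiv:1404.7348 — 3 statements merged into one kernel-verified Lean document; each statement's English description precedes it below -/
import Mathlib

section
/- Let α > 5/6 be fixed, p = n^{-α}, and G ~ G(n,p). Then for any constant c > 0, the probability that every set of at most c√n vertices of G induces a 3-colorable subgraph tends to 1 as n → ∞. Specifically, the probability that some set T of 4 ≤ t ≤ c√n vertices is not 3-colorable is at most Σ_{t=4}^{c√n} C(n,t)·C(C(t,2), 3t/2)·p^{3t/2}, which is o(1). -/
open MeasureTheory

noncomputable def bernoulliMeasure (p : ℝ) : Measure Bool :=
  ENNReal.ofReal p • Measure.dirac true + ENNReal.ofReal (1 - p) • Measure.dirac false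

/-- The Erdős–Rényi measure `G(n,p)` on edge indicator functions. -/
noncomputable def gnp (n : ℕ) (p : ℝ) : Measure (Sym2 (Fin n) → Bool) :=
  Measure.pi fun _ => bernoulliMeasure p

def graphOf {n : ℕ} (ω : Sym2 (Fin n) → Bool) : SimpleGraph (Fin n) :=
  SimpleGraph.fromRel fun u v => ω s(u, v) = true

instance (p : ℝ) : IsFiniteMeasure (bernoulliMeasure p) := by
  constructor
  simp only [bernoulliMeasure, Measure.add_apply, Measure.smul_apply, measure_univ, smul_eq_mul,
    mul_one]
  exact ENNReal.add_lt_top.2 ⟨ENNReal.ofReal_lt_top, ENNReal.ofReal_lt_top⟩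

lemma bern_true (p : ℝ) : bernoulliMeasure p {true} = ENNReal.ofReal p := by
  simp [bernoulliMeasure, Measure.dirac_apply' _ (measurableSet_singleton _)]

lemma bern_univ (p : ℝ) (h0 : 0 ≤ p) (h1 : p ≤ 1) : bernoulliMeasure p Set.univ = 1 := by
  simp only [bernoulliMeasure, Measure.add_apply, Measure.smul_apply, measure_univ, smul_eq_mul,
    mul_one]
  rw [← ENNReal.ofReal_add h0 (by linarith)]
  norm_num

lemma gnp_univ (n : ℕ) (p : ℝ) (h0 : 0 ≤ p) (h1 : p ≤ 1) : gnp n p Set.univ = 1 := by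
  rw [gnp, Measure.pi_univ]
  simp only [bern_univ p h0 h1, Finset.prod_const, one_pow]

lemma gnp_cylinder (n : ℕ) (p : ℝ) (h0 : 0 ≤ p) (h1 : p ≤ 1) (F : Finset (Sym2 (Fin n))) :
    gnp n p {ω | ∀ e ∈ F, ω e = true} = ENNReal.ofReal p ^ F.card := by
  classical
  have hset : {ω : Sym2 (Fin n) → Bool | ∀ e ∈ F, ω e = true}
      = Set.univ.pi (fun e => if e ∈ F then {true} else Set.univ) := by
    ext ω
    simp only [Set.mem_setOf_eq, Set.mem_pi, Set.mem_univ, forall_true_left]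
    constructor
    · intro h e; split_ifs with he
      · exact h e he
      · trivial
    · intro h e he; have := h e; rw [if_pos he] at this; exact this
  rw [gnp, hset, Measure.pi_pi]
  have : ∀ e : Sym2 (Fin n), bernoulliMeasure p (if e ∈ F then ({true} : Set Bool) else Set.univ)
      = if e ∈ F then ENNReal.ofReal p else 1 := by
    intro e; split_ifs
    · exact bern_true p
    · exact bern_univ p h0 h1
  simp only [this]
  rw [Finset.prod_ite_mem Finset.univ F, Finset.univ_inter, Finset.prod_const]


def kfun (t : ℕ) : ℕ := (3 * t + 1) / 2

def edgeCand {n : ℕ} (T : Finset (Fin n)) : Finset (Sym2 (Fin n)) :=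
  ((T ×ˢ T).filter fun pr => pr.1 ≠ pr.2).image fun pr => s(pr.1, pr.2)

lemma edgeCand_card_le {n : ℕ} (T : Finset (Fin n)) :
    (edgeCand T).card ≤ T.card * T.card := by
  calc (edgeCand T).card ≤ ((T ×ˢ T).filter fun pr => pr.1 ≠ pr.2).card :=
        Finset.card_image_le
    _ ≤ (T ×ˢ T).card := Finset.card_filter_le _ _
    _ = T.card * T.card := Finset.card_product T T

lemma graph_main {n : ℕ} (G : SimpleGraph (Fin n)) (S : Finset (Fin n))
    (h : ¬ (G.induce (S : Set (Fin n))).Colorable 3) :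
    ∃ T : Finset (Fin n), T ⊆ S ∧ 1 ≤ T.card ∧
      ∃ F ∈ Finset.powersetCard (kfun T.card) (edgeCand T),
        ∀ e ∈ F, e ∈ G.edgeSet := by
  classical
  set 𝒮 := S.powerset.filter (fun T : Finset (Fin n) => ¬ (G.induce (T : Set (Fin n))).Colorable 3) with h𝒮
  have hS𝒮 : S ∈ 𝒮 := by
    simp only [h𝒮, Finset.mem_filter, Finset.mem_powerset]
    exact ⟨le_refl S, h⟩
  obtain ⟨T, hT𝒮, hTmin⟩ := Finset.exists_min_image 𝒮 Finset.card ⟨S, hS𝒮⟩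
  simp only [h𝒮, Finset.mem_filter, Finset.mem_powerset] at hT𝒮
  obtain ⟨hTS, hTnc⟩ := hT𝒮
  refine ⟨T, hTS, ?_, ?_⟩
  · -- T nonempty
    rcases Nat.eq_zero_or_pos T.card with h0 | h1
    · exfalso
      refine hTnc ⟨SimpleGraph.Coloring.mk (fun v => (0 : Fin 3)) ?_⟩
      intro v w _
      exact absurd v.2 (by simp [Finset.card_eq_zero.mp h0])
    · exact h1
  · -- min degree ≥ 3
    set H := G.induce (T : Set (Fin n)) with hH
    have hdeg : ∀ v : (T : Set (Fin n)), 3 ≤ H.degree v := by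
      intro v
      by_contra hlt
      push_neg at hlt
      -- T.erase v.1 induces a colorable graph
      have herase : (G.induce ((T.erase v.1 : Finset (Fin n)) : Set (Fin n))).Colorable 3 := by
        by_contra hnc
        have hmem : T.erase v.1 ∈ 𝒮 := by
          simp only [h𝒮, Finset.mem_filter, Finset.mem_powerset]
          exact ⟨(Finset.erase_subset _ _).trans hTS, hnc⟩
        have := hTmin _ hmem
        have hcard : (T.erase v.1).card < T.card :=
          Finset.card_erase_lt_of_mem (by exact v.2)
        omega
      obtain ⟨C'⟩ := herase
      -- extend the coloring
      have hmem' : ∀ u : (T : Set (Fin n)), u.1 ≠ v.1 →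
          u.1 ∈ ((T.erase v.1 : Finset (Fin n)) : Set (Fin n)) := by
        intro u hu
        simp only [Finset.coe_erase, Set.mem_diff, Set.mem_singleton_iff]
        exact ⟨u.2, hu⟩
      set g : ((T : Set (Fin n)) : Type) → Fin 3 := fun u : (T : Set (Fin n)) =>
        if hu : u.1 ∈ ((T.erase v.1 : Finset (Fin n)) : Set (Fin n)) then C' ⟨u.1, hu⟩ else 0
        with hg
      set used : Finset (Fin 3) := (H.neighborFinset v).image g with hused
      have husedcard : used.card < 3 := by
        calc used.card ≤ (H.neighborFinset v).card := Finset.card_image_le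
          _ = H.degree v := (SimpleGraph.card_neighborFinset_eq_degree _ _)
          _ < 3 := hlt
      have : (usedᶜ : Finset (Fin 3)).Nonempty := by
        rw [← Finset.card_pos, Finset.card_compl]
        simp only [Fintype.card_fin]
        omega
      obtain ⟨c, hc⟩ := this
      rw [Finset.mem_compl] at hc
      refine hTnc ⟨SimpleGraph.Coloring.mk (fun u => if u.1 = v.1 then c else g u) ?_⟩
      intro a b hab
      beta_reduce
      have hadj : G.Adj a.1 b.1 := hab
      have hne : a.1 ≠ b.1 := G.ne_of_adj hadj
      by_cases ha : a.1 = v.1 <;> by_cases hb : b.1 = v.1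
      · exact absurd (ha.trans hb.symm) hne
      · -- a = v
        rw [if_pos ha, if_neg hb]
        have hav : a = v := Subtype.ext ha
        have hbmem : b ∈ H.neighborFinset v := by
          rw [SimpleGraph.mem_neighborFinset]
          rw [← hav]; exact hab
        intro hcontra
        exact hc (by rw [hcontra]; exact Finset.mem_image_of_mem g hbmem)
      · rw [if_neg ha, if_pos hb]
        have hbv : b = v := Subtype.ext hb
        have hamem : a ∈ H.neighborFinset v := by
          rw [SimpleGraph.mem_neighborFinset]
          rw [← hbv]; exact hab.symm
        intro hcontra
        exact hc (by rw [← hcontra]; exact Finset.mem_image_of_mem g hamem)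
      · rw [if_neg ha, if_neg hb]
        simp only [hg]
        rw [dif_pos (hmem' a ha), dif_pos (hmem' b hb)]
        exact C'.valid hadj
    -- handshake
    have hsum : 3 * T.card ≤ ∑ v : (T : Set (Fin n)), H.degree v := by
      have hcard : Fintype.card (T : Set (Fin n)) = T.card := by
        simp
      calc 3 * T.card = ∑ _v : (T : Set (Fin n)), 3 := by
            rw [Finset.sum_const, Finset.card_univ, hcard]; ring
        _ ≤ ∑ v : (T : Set (Fin n)), H.degree v := Finset.sum_le_sum fun v _ => hdeg v
    rw [SimpleGraph.sum_degrees_eq_twice_card_edges] at hsum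
    -- map edges
    set ι : Sym2 (T : Set (Fin n)) → Sym2 (Fin n) := Sym2.map Subtype.val with hι
    have hιinj : Function.Injective ι := Sym2.map.injective Subtype.val_injective
    set F₀ : Finset (Sym2 (Fin n)) := H.edgeFinset.image ι with hF₀
    have hF₀card : F₀.card = H.edgeFinset.card := Finset.card_image_of_injective _ hιinj
    have hF₀sub : F₀ ⊆ edgeCand T := by
      intro e he
      rw [hF₀, Finset.mem_image] at he
      obtain ⟨e', he', rfl⟩ := he
      rw [SimpleGraph.mem_edgeFinset] at he'
      induction e' using Sym2.ind with
      | _ a b =>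
        rw [SimpleGraph.mem_edgeSet] at he'
        have hadj : G.Adj a.1 b.1 := he'
        rw [edgeCand, Finset.mem_image]
        refine ⟨(a.1, b.1), ?_, rfl⟩
        rw [Finset.mem_filter, Finset.mem_product]
        exact ⟨⟨a.2, b.2⟩, G.ne_of_adj hadj⟩
    have hF₀G : ∀ e ∈ F₀, e ∈ G.edgeSet := by
      intro e he
      rw [hF₀, Finset.mem_image] at he
      obtain ⟨e', he', rfl⟩ := he
      rw [SimpleGraph.mem_edgeFinset] at he'
      induction e' using Sym2.ind with
      | _ a b =>
        rw [show ι s(a, b) = s(a.1, b.1) from rfl, SimpleGraph.mem_edgeSet]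
        exact he'
    have hkF₀ : kfun T.card ≤ F₀.card := by
      rw [hF₀card, kfun]; omega
    obtain ⟨F, hFsub, hFcard⟩ := Finset.exists_subset_card_eq hkF₀
    refine ⟨F, ?_, fun e he => hF₀G e (hFsub he)⟩
    rw [Finset.mem_powersetCard]
    exact ⟨hFsub.trans hF₀sub, hFcard⟩


-- 1/k! ≤ (e/k)^k
lemma factorial_inv_le (k : ℕ) (hk : 1 ≤ k) :
    ((k : ℝ) ^ k : ℝ) ≤ Real.exp 1 ^ k * k.factorial := by
  have h := Real.sum_le_exp_of_nonneg (x := (k : ℝ)) (by positivity) (k + 1)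
  have hterm : (k : ℝ) ^ k / k.factorial ≤ Real.exp k := by
    refine le_trans ?_ h
    refine Finset.single_le_sum (f := fun i => (k : ℝ) ^ i / i.factorial) ?_ ?_
    · intro i _; positivity
    · simp
  rw [← Real.exp_one_rpow (k : ℝ), Real.rpow_natCast] at hterm
  have hfac : (0 : ℝ) < k.factorial := by positivity
  calc ((k : ℝ) ^ k) = ((k : ℝ) ^ k / k.factorial) * k.factorial := by field_simp
    _ ≤ Real.exp 1 ^ k * k.factorial := by
        apply mul_le_mul_of_nonneg_right hterm (le_of_lt hfac)

lemma choose_le_real (m k : ℕ) (hk : 1 ≤ k) :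
    (m.choose k : ℝ) ≤ (Real.exp 1 * m / k) ^ k := by
  have h1 : (m.choose k : ℝ) * k.factorial ≤ (m : ℝ) ^ k := by
    have := Nat.descFactorial_le_pow m k
    have heq := Nat.descFactorial_eq_factorial_mul_choose m k
    have h3 : m.choose k * k.factorial ≤ m ^ k := by
      have h4 : k.factorial * m.choose k ≤ m ^ k := heq ▸ this
      rwa [mul_comm] at h4
    calc (m.choose k : ℝ) * k.factorial = ((m.choose k * k.factorial : ℕ) : ℝ) := by push_cast; ring
      _ ≤ ((m ^ k : ℕ) : ℝ) := by exact_mod_cast h3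
      _ = (m : ℝ) ^ k := by push_cast; ring
  have h2 := factorial_inv_le k hk
  have hk0 : (0 : ℝ) < k := by exact_mod_cast hk
  have hfac : (0 : ℝ) < k.factorial := by positivity
  have hm0 : (0 : ℝ) ≤ (m : ℝ) ^ k := by positivity
  have hrw : (Real.exp 1 * m / k) ^ k = Real.exp 1 ^ k * (m : ℝ) ^ k / (k : ℝ) ^ k := by
    rw [div_pow, mul_pow]
  rw [hrw, le_div_iff₀ (by positivity)]
  have hc0 : (0 : ℝ) ≤ (m.choose k : ℝ) := by positivity
  nlinarith [mul_le_mul_of_nonneg_left h2 hc0, mul_le_mul_of_nonneg_right h1 (le_of_lt (by positivity : (0:ℝ) < Real.exp 1 ^ k))]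

lemma geom_Icc_le' (r : ℝ) (h0 : 0 ≤ r) (h2 : r ≤ 1/2) (n : ℕ) :
    ∑ t ∈ Finset.Icc 1 n, r ^ t ≤ 2 * r - 2 * r ^ (n + 1) := by
  induction n with
  | zero => simp
  | succ n ih =>
    rw [Finset.sum_Icc_succ_top (by omega : 1 ≤ n + 1)]
    have h1 : r ^ (n + 2) ≤ r ^ (n + 1) / 2 := by
      have := mul_le_mul_of_nonneg_left h2 (pow_nonneg h0 (n + 1))
      calc r ^ (n + 2) = r ^ (n + 1) * r := by ring
        _ ≤ r ^ (n + 1) * (1 / 2) := this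
        _ = r ^ (n + 1) / 2 := by ring
    linarith

lemma geom_Icc_le (r : ℝ) (h0 : 0 ≤ r) (h2 : r ≤ 1/2) (n : ℕ) :
    ∑ t ∈ Finset.Icc 1 n, r ^ t ≤ 2 * r := by
  have := geom_Icc_le' r h0 h2 n
  have h3 : 0 ≤ r ^ (n + 1) := pow_nonneg h0 _
  linarith

noncomputable def Tfam (c : ℝ) (n : ℕ) : Finset (Finset (Fin n)) :=
  Finset.univ.filter (fun T : Finset (Fin n) => 1 ≤ T.card ∧ (T.card : ℝ) ≤ c * Real.sqrt n)

noncomputable def IdxF (c : ℝ) (n : ℕ) : Finset (Σ _ : Finset (Fin n), Finset (Sym2 (Fin n))) :=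
  (Tfam c n).sigma (fun T => Finset.powersetCard (kfun T.card) (edgeCand T))

noncomputable def R2v (c p : ℝ) (n : ℕ) : ℝ :=
  Real.exp 1 ^ 2 * (n : ℝ) ^ 2 * ((2/3) * Real.exp 1 * p) ^ 3 * (c * Real.sqrt n)

lemma R2v_nonneg (c p : ℝ) (hc : 0 ≤ c) (hp : 0 ≤ p) (n : ℕ) : 0 ≤ R2v c p n := by
  unfold R2v; positivity

-- per-T bound
lemma perT_bound (n : ℕ) (p : ℝ) (hp0 : 0 ≤ p) (T : Finset (Fin n)) (ht1 : 1 ≤ T.card) :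
    ((edgeCand T).card.choose (kfun T.card) : ℝ) * p ^ (kfun T.card)
      ≤ ((2/3) * Real.exp 1 * T.card * p) ^ (kfun T.card) := by
  have he0 : (0:ℝ) < Real.exp 1 := Real.exp_pos 1
  set t := T.card with htdef
  set k := kfun t with hkdef
  have hk1 : 1 ≤ k := by rw [hkdef, kfun]; omega
  have hk2 : 3 * t ≤ 2 * k := by rw [hkdef, kfun]; omega
  have hk0 : (0:ℝ) < k := by exact_mod_cast hk1
  have hm : ((edgeCand T).card : ℝ) ≤ (t:ℝ) * t := by exact_mod_cast edgeCand_card_le T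
  have h1 : ((edgeCand T).card.choose k : ℝ) ≤ (Real.exp 1 * (edgeCand T).card / k) ^ k :=
    choose_le_real _ _ hk1
  have ht0 : (1:ℝ) ≤ (t:ℝ) := by exact_mod_cast ht1
  have hk2' : 3 * (t:ℝ) ≤ 2 * (k:ℝ) := by exact_mod_cast hk2
  have hbase : Real.exp 1 * (edgeCand T).card / k * p ≤ (2/3) * Real.exp 1 * t * p := by
    apply mul_le_mul_of_nonneg_right _ hp0
    rw [div_le_iff₀ hk0]
    nlinarith [mul_le_mul_of_nonneg_left hm he0.le,
      mul_le_mul_of_nonneg_left hk2' (mul_nonneg he0.le (by linarith : (0:ℝ) ≤ (t:ℝ)))]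
  calc ((edgeCand T).card.choose k : ℝ) * p ^ k
      ≤ (Real.exp 1 * (edgeCand T).card / k) ^ k * p ^ k :=
        mul_le_mul_of_nonneg_right h1 (by positivity)
    _ = (Real.exp 1 * (edgeCand T).card / k * p) ^ k := by rw [mul_pow]
    _ ≤ ((2/3) * Real.exp 1 * t * p) ^ k := by
        apply pow_le_pow_left₀ (by positivity) hbase

-- per-t bound
lemma pert_bound (c p : ℝ) (hc : 0 < c) (hp0 : 0 ≤ p) (n t : ℕ) (ht1 : 1 ≤ t)
    (htc : (t : ℝ) ≤ c * Real.sqrt n)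
    (hq1 : (2/3) * Real.exp 1 * (t:ℝ) * p ≤ 1) :
    (n.choose t : ℝ) * ((2/3) * Real.exp 1 * t * p) ^ (kfun t)
      ≤ Real.sqrt (R2v c p n) ^ t := by
  have he0 : (0:ℝ) < Real.exp 1 := Real.exp_pos 1
  have ht0 : (0:ℝ) < (t:ℝ) := by exact_mod_cast ht1
  have hqdef : (2/3) * Real.exp 1 * (t:ℝ) * p = (2/3) * Real.exp 1 * (t:ℝ) * p := rfl
  set q := (2/3) * Real.exp 1 * (t:ℝ) * p with hqd
  have hq0 : 0 ≤ q := by positivity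
  have hk2 : 3 * t ≤ 2 * kfun t := by rw [kfun]; omega
  have hCn : (n.choose t : ℝ) ≤ (Real.exp 1 * n / t) ^ t := choose_le_real n t ht1
  have hC0 : (0:ℝ) ≤ (n.choose t : ℝ) := by positivity
  have hR0 : 0 ≤ R2v c p n := R2v_nonneg c p hc.le hp0 n
  have hsq : ((n.choose t : ℝ) * q ^ (kfun t)) ^ 2 ≤ (R2v c p n) ^ t := by
    have e2 : (n.choose t : ℝ)^2 ≤ ((Real.exp 1 * n / t) ^ t)^2 :=
      pow_le_pow_left₀ hC0 hCn 2
    have e4 : q ^ (2 * kfun t) ≤ q ^ (3 * t) := pow_le_pow_of_le_one hq0 hq1 hk2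
    have key : ∀ A B : ℝ, (A ^ t)^2 * B ^ (3 * t) = (A^2 * B^3) ^ t := by
      intro A B
      rw [mul_pow, pow_right_comm A, pow_mul]
    have expand : (Real.exp 1 * n / t)^2 * q^3
        = Real.exp 1^2 * (n:ℝ)^2 * ((2/3) * Real.exp 1 * p)^3 * t := by
      rw [hqd, div_pow, div_mul_eq_mul_div,
        div_eq_iff (by positivity : (0:ℝ) < (t:ℝ)^2).ne']
      ring
    have last : ((Real.exp 1 * n / t)^2 * q^3) ^ t ≤ (R2v c p n) ^ t := by
      apply pow_le_pow_left₀ (by rw [expand]; positivity)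
      rw [expand, R2v]
      exact mul_le_mul_of_nonneg_left htc (by positivity)
    calc ((n.choose t : ℝ) * q ^ (kfun t)) ^ 2
        = (n.choose t : ℝ)^2 * q ^ (2 * kfun t) := by rw [mul_pow, ← pow_mul, mul_comm (kfun t) 2]
      _ ≤ ((Real.exp 1 * n / t) ^ t)^2 * q ^ (3 * t) :=
          mul_le_mul e2 e4 (by positivity) (by positivity)
      _ = ((Real.exp 1 * n / t)^2 * q^3) ^ t := key _ _
      _ ≤ (R2v c p n) ^ t := last
  have hrt : (Real.sqrt (R2v c p n) ^ t) ^ 2 = (R2v c p n) ^ t := by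
    rw [← pow_mul, mul_comm t 2, pow_mul, Real.sq_sqrt hR0]
  refine le_of_pow_le_pow_left₀ (n := 2) (by norm_num) (by positivity) ?_
  rw [hrt]
  exact hsq

lemma count_bound (c : ℝ) (hc : 0 < c) (n : ℕ) (p : ℝ) (hp0 : 0 ≤ p)
    (hq : (2/3) * Real.exp 1 * (c * Real.sqrt n) * p ≤ 1)
    (hr : Real.sqrt (R2v c p n) ≤ 1/2) :
    ∑ x ∈ IdxF c n, p ^ x.2.card ≤ 2 * Real.sqrt (R2v c p n) := by
  classical
  have he0 : (0:ℝ) < Real.exp 1 := Real.exp_pos 1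
  have hr0 : 0 ≤ Real.sqrt (R2v c p n) := Real.sqrt_nonneg _
  -- facts about members of Tfam
  have hmemT : ∀ T ∈ Tfam c n, 1 ≤ T.card ∧ (T.card : ℝ) ≤ c * Real.sqrt n := by
    intro T hT
    rw [Tfam, Finset.mem_filter] at hT
    exact hT.2
  -- for any t arising, q_t ≤ 1
  have hq1 : ∀ t : ℕ, (t : ℝ) ≤ c * Real.sqrt n → (2/3) * Real.exp 1 * (t:ℝ) * p ≤ 1 := by
    intro t htc
    refine le_trans ?_ hq
    apply mul_le_mul_of_nonneg_right _ hp0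
    exact mul_le_mul_of_nonneg_left htc (by positivity)
  -- step 1
  have step1 : ∑ x ∈ IdxF c n, p ^ x.2.card
      = ∑ T ∈ Tfam c n, ((edgeCand T).card.choose (kfun T.card) : ℝ) * p ^ (kfun T.card) := by
    rw [IdxF, Finset.sum_sigma]
    refine Finset.sum_congr rfl (fun T _hT => ?_)
    have hcongr : ∀ F ∈ Finset.powersetCard (kfun T.card) (edgeCand T),
        p ^ F.card = p ^ (kfun T.card) := by
      intro F hF
      rw [(Finset.mem_powersetCard.mp hF).2]
    rw [Finset.sum_congr rfl hcongr, Finset.sum_const, Finset.card_powersetCard, nsmul_eq_mul]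
  rw [step1]
  have step2 : ∑ T ∈ Tfam c n, ((edgeCand T).card.choose (kfun T.card) : ℝ) * p ^ (kfun T.card)
      ≤ ∑ T ∈ Tfam c n, ((2/3) * Real.exp 1 * T.card * p) ^ (kfun T.card) :=
    Finset.sum_le_sum (fun T hT => perT_bound n p hp0 T (hmemT T hT).1)
  have step3 : ∑ T ∈ Tfam c n, ((2/3) * Real.exp 1 * T.card * p) ^ (kfun T.card)
      = ∑ t ∈ (Tfam c n).image Finset.card,
          ((Tfam c n).filter (fun T => T.card = t)).card
            • ((2/3) * Real.exp 1 * t * p) ^ (kfun t) :=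
    Finset.sum_comp (fun t : ℕ => ((2/3) * Real.exp 1 * t * p) ^ (kfun t)) Finset.card
  have step4 : ∀ t ∈ (Tfam c n).image Finset.card,
      (((Tfam c n).filter (fun T => T.card = t)).card : ℝ)
        * ((2/3) * Real.exp 1 * t * p) ^ (kfun t) ≤ Real.sqrt (R2v c p n) ^ t := by
    intro t ht
    rw [Finset.mem_image] at ht
    obtain ⟨T, hT, rfl⟩ := ht
    obtain ⟨ht1, htc⟩ := hmemT T hT
    have hcount : (((Tfam c n).filter (fun T' => T'.card = T.card)).card : ℝ)
        ≤ (n.choose T.card : ℝ) := by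
      have h1 : ((Tfam c n).filter (fun T' => T'.card = T.card)).card
          ≤ ((Finset.univ : Finset (Finset (Fin n))).filter
              (fun T' => T'.card = T.card)).card :=
        Finset.card_le_card (Finset.filter_subset_filter _ (Finset.filter_subset _ _))
      have h2 : (Finset.univ : Finset (Finset (Fin n))).filter (fun T' => T'.card = T.card)
          = Finset.powersetCard T.card (Finset.univ : Finset (Fin n)) := by
        rw [Finset.powersetCard_eq_filter, Finset.powerset_univ]
      rw [h2, Finset.card_powersetCard, Finset.card_univ, Fintype.card_fin] at h1
      exact_mod_cast h1
    calc (((Tfam c n).filter (fun T' => T'.card = T.card)).card : ℝ)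
          * ((2/3) * Real.exp 1 * T.card * p) ^ (kfun T.card)
        ≤ (n.choose T.card : ℝ) * ((2/3) * Real.exp 1 * T.card * p) ^ (kfun T.card) := by
          apply mul_le_mul_of_nonneg_right hcount (by positivity)
      _ ≤ Real.sqrt (R2v c p n) ^ T.card :=
          pert_bound c p hc hp0 n T.card ht1 htc (hq1 T.card htc)
  have himage : (Tfam c n).image Finset.card ⊆ Finset.Icc 1 n := by
    intro t ht
    rw [Finset.mem_image] at ht
    obtain ⟨T, hT, rfl⟩ := ht
    rw [Finset.mem_Icc]
    exact ⟨(hmemT T hT).1, le_trans (Finset.card_le_univ T) (by simp)⟩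
  calc ∑ T ∈ Tfam c n, ((edgeCand T).card.choose (kfun T.card) : ℝ) * p ^ (kfun T.card)
      ≤ ∑ T ∈ Tfam c n, ((2/3) * Real.exp 1 * T.card * p) ^ (kfun T.card) := step2
    _ = ∑ t ∈ (Tfam c n).image Finset.card,
          ((Tfam c n).filter (fun T => T.card = t)).card
            • ((2/3) * Real.exp 1 * t * p) ^ (kfun t) := step3
    _ ≤ ∑ t ∈ (Tfam c n).image Finset.card, Real.sqrt (R2v c p n) ^ t := by
        refine Finset.sum_le_sum (fun t ht => ?_)
        rw [nsmul_eq_mul]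
        exact step4 t ht
    _ ≤ ∑ t ∈ Finset.Icc 1 n, Real.sqrt (R2v c p n) ^ t := by
        refine Finset.sum_le_sum_of_subset_of_nonneg himage (fun t _ _ => by positivity)
    _ ≤ 2 * Real.sqrt (R2v c p n) := geom_Icc_le _ hr0 hr n


lemma edge_true {n : ℕ} (ω : Sym2 (Fin n) → Bool) :
    ∀ e ∈ (graphOf ω).edgeSet, ω e = true := by
  intro e he
  induction e using Sym2.ind with
  | _ a b =>
    rw [SimpleGraph.mem_edgeSet] at he
    rw [graphOf, SimpleGraph.fromRel_adj] at he
    rcases he.2 with h | h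
    · exact h
    · rw [Sym2.eq_swap] at h; exact h

-- rpow helper lemmas
lemma sqrt_mul_rpow (α : ℝ) (n : ℕ) (hn : 1 ≤ n) :
    Real.sqrt n * (n : ℝ) ^ (-α) = (n : ℝ) ^ (1/2 - α) := by
  have h0 : (0:ℝ) < n := by exact_mod_cast hn
  rw [Real.sqrt_eq_rpow, ← Real.rpow_add h0]
  norm_num
  ring_nf

lemma rpow_form (α : ℝ) (n : ℕ) (hn : 1 ≤ n) :
    (n:ℝ)^2 * ((n:ℝ)^(-α))^3 * Real.sqrt n = (n:ℝ)^(5/2 - 3*α) := by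
  have h0 : (0:ℝ) < n := by exact_mod_cast hn
  rw [Real.sqrt_eq_rpow, ← Real.rpow_natCast ((n:ℝ)^(-α)) 3, ← Real.rpow_mul h0.le,
    ← Real.rpow_natCast (n:ℝ) 2, ← Real.rpow_add h0, ← Real.rpow_add h0]
  norm_num
  ring_nf

lemma limit_aux (β : ℝ) (hβ : β < 0) :
    Filter.Tendsto (fun n : ℕ => (n:ℝ) ^ β) Filter.atTop (nhds 0) := by
  have h := tendsto_rpow_neg_atTop (y := -β) (by linarith)
  simp only [neg_neg] at h
  exact h.comp tendsto_natCast_atTop_atTop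

/-- For `p = n^{-α}` with `α > 5/6` fixed and any constant `c > 0`, the probability that every
set of at most `c√n` vertices of `G ~ G(n,p)` induces a `3`-colorable subgraph tends to `1`
as `n → ∞`. -/
theorem small_sets_three_colorable (α : ℝ) (hα : 5 / 6 < α) (c : ℝ) (hc : 0 < c) :
    Filter.Tendsto
      (fun n : ℕ => gnp n ((n : ℝ) ^ (-α))
        {ω | ∀ S : Finset (Fin n), (S.card : ℝ) ≤ c * Real.sqrt n →
          ((graphOf ω).induce (S : Set (Fin n))).Colorable 3})
      Filter.atTop (nhds 1) := by
  classical
  set p : ℕ → ℝ := fun n => (n : ℝ) ^ (-α) with hp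
  set Gset : (n : ℕ) → Set (Sym2 (Fin n) → Bool) := fun n =>
    {ω | ∀ S : Finset (Fin n), (S.card : ℝ) ≤ c * Real.sqrt n →
      ((graphOf ω).induce (S : Set (Fin n))).Colorable 3} with hGset
  have hαpos : (0:ℝ) < α := lt_trans (by norm_num) hα
  have hp_pos : ∀ n : ℕ, 1 ≤ n → 0 < p n := fun n hn =>
    Real.rpow_pos_of_pos (by exact_mod_cast hn) _
  have hp_le1 : ∀ n : ℕ, 1 ≤ n → p n ≤ 1 := fun n hn =>
    Real.rpow_le_one_of_one_le_of_nonpos (by exact_mod_cast hn) (by linarith)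
  -- the inclusion and union bound
  have hbad : ∀ n : ℕ, 1 ≤ n →
      gnp n (p n) (Gset n)ᶜ ≤ ENNReal.ofReal (∑ x ∈ IdxF c n, (p n) ^ x.2.card) := by
    intro n hn
    have hsub : (Gset n)ᶜ ⊆ ⋃ x ∈ IdxF c n, {ω : Sym2 (Fin n) → Bool | ∀ e ∈ x.2, ω e = true} := by
      intro ω hω
      rw [hGset, Set.mem_compl_iff, Set.mem_setOf_eq] at hω
      push_neg at hω
      obtain ⟨S, hScard, hSnc⟩ := hω
      obtain ⟨T, hTS, hT1, F, hF, hFedge⟩ := graph_main (graphOf ω) S hSnc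
      have hx : (⟨T, F⟩ : Σ _ : Finset (Fin n), Finset (Sym2 (Fin n))) ∈ IdxF c n := by
        rw [IdxF, Finset.mem_sigma]
        constructor
        · rw [Tfam, Finset.mem_filter]
          refine ⟨Finset.mem_univ _, hT1, ?_⟩
          calc (T.card : ℝ) ≤ (S.card : ℝ) := by
                exact_mod_cast Finset.card_le_card hTS
            _ ≤ c * Real.sqrt n := hScard
        · exact hF
      refine Set.mem_biUnion hx ?_
      exact fun e he => edge_true ω e (hFedge e he)
    calc gnp n (p n) (Gset n)ᶜ
        ≤ gnp n (p n) (⋃ x ∈ IdxF c n, {ω : Sym2 (Fin n) → Bool | ∀ e ∈ x.2, ω e = true}) :=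
          measure_mono hsub
      _ ≤ ∑ x ∈ IdxF c n, gnp n (p n) {ω : Sym2 (Fin n) → Bool | ∀ e ∈ x.2, ω e = true} :=
          measure_biUnion_finset_le _ _
      _ = ∑ x ∈ IdxF c n, ENNReal.ofReal ((p n) ^ x.2.card) := by
          refine Finset.sum_congr rfl (fun x _ => ?_)
          rw [gnp_cylinder n (p n) (hp_pos n hn).le (hp_le1 n hn),
            ENNReal.ofReal_pow (hp_pos n hn).le]
      _ = ENNReal.ofReal (∑ x ∈ IdxF c n, (p n) ^ x.2.card) := by
          rw [ENNReal.ofReal_sum_of_nonneg (fun x _ => by positivity)]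
  -- limits
  have hqlim : Filter.Tendsto (fun n : ℕ => (2/3) * Real.exp 1 * (c * Real.sqrt n) * p n)
      Filter.atTop (nhds 0) := by
    have hev : (fun n : ℕ => (2/3) * Real.exp 1 * c * ((n:ℝ) ^ (1/2 - α)))
        =ᶠ[Filter.atTop] (fun n : ℕ => (2/3) * Real.exp 1 * (c * Real.sqrt n) * p n) := by
      filter_upwards [Filter.eventually_ge_atTop 1] with n hn
      rw [← sqrt_mul_rpow α n hn]; ring
    have := ((limit_aux (1/2 - α) (by linarith)).const_mul ((2/3) * Real.exp 1 * c)).congr' hev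
    simpa using this
  have hR2lim : Filter.Tendsto (fun n : ℕ => R2v c (p n) n) Filter.atTop (nhds 0) := by
    have hev : (fun n : ℕ => Real.exp 1 ^ 2 * ((2/3) * Real.exp 1)^3 * c * ((n:ℝ) ^ (5/2 - 3*α)))
        =ᶠ[Filter.atTop] (fun n : ℕ => R2v c (p n) n) := by
      filter_upwards [Filter.eventually_ge_atTop 1] with n hn
      rw [R2v, ← rpow_form α n hn, hp]
      ring
    have := ((limit_aux (5/2 - 3*α) (by linarith)).const_mul
      (Real.exp 1 ^ 2 * ((2/3) * Real.exp 1)^3 * c)).congr' hev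
    simpa using this
  have hrlim : Filter.Tendsto (fun n : ℕ => Real.sqrt (R2v c (p n) n)) Filter.atTop (nhds 0) := by
    have := (Real.continuous_sqrt.tendsto 0).comp hR2lim
    simpa [Function.comp_def] using this
  -- eventual hypotheses
  have hev1 : ∀ᶠ n : ℕ in Filter.atTop, (1:ℕ) ≤ n := Filter.eventually_ge_atTop 1
  have hevq : ∀ᶠ n : ℕ in Filter.atTop, (2/3) * Real.exp 1 * (c * Real.sqrt n) * p n ≤ 1 :=
    (hqlim.eventually_lt_const (by norm_num)).mono (fun n h => h.le)
  have hevr : ∀ᶠ n : ℕ in Filter.atTop, Real.sqrt (R2v c (p n) n) ≤ 1/2 :=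
    (hrlim.eventually_lt_const (by norm_num)).mono (fun n h => h.le)
  -- bad measure tends to zero
  have hbad0 : Filter.Tendsto (fun n : ℕ => gnp n (p n) (Gset n)ᶜ) Filter.atTop (nhds 0) := by
    have hub : ∀ᶠ n : ℕ in Filter.atTop,
        gnp n (p n) (Gset n)ᶜ ≤ ENNReal.ofReal (2 * Real.sqrt (R2v c (p n) n)) := by
      filter_upwards [hev1, hevq, hevr] with n h1 h2 h3
      refine le_trans (hbad n h1) (ENNReal.ofReal_le_ofReal ?_)
      exact count_bound c hc n (p n) (hp_pos n h1).le h2 h3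
    have hub0 : Filter.Tendsto (fun n : ℕ => ENNReal.ofReal (2 * Real.sqrt (R2v c (p n) n)))
        Filter.atTop (nhds 0) := by
      have := ENNReal.tendsto_ofReal (hrlim.const_mul 2)
      simpa using this
    exact tendsto_of_tendsto_of_tendsto_of_le_of_le' tendsto_const_nhds hub0
      (Filter.Eventually.of_forall (fun n => zero_le)) hub
  -- assemble
  have hupper : ∀ᶠ n : ℕ in Filter.atTop, gnp n (p n) (Gset n) ≤ 1 := by
    filter_upwards [hev1] with n h1
    calc gnp n (p n) (Gset n) ≤ gnp n (p n) Set.univ := measure_mono (Set.subset_univ _)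
      _ = 1 := gnp_univ n (p n) (hp_pos n h1).le (hp_le1 n h1)
  have hlower : ∀ᶠ n : ℕ in Filter.atTop,
      1 - gnp n (p n) (Gset n)ᶜ ≤ gnp n (p n) (Gset n) := by
    filter_upwards [hev1] with n h1
    rw [tsub_le_iff_right]
    calc (1:ENNReal) = gnp n (p n) Set.univ := (gnp_univ n (p n) (hp_pos n h1).le (hp_le1 n h1)).symm
      _ = gnp n (p n) (Gset n ∪ (Gset n)ᶜ) := by rw [Set.union_compl_self]
      _ ≤ gnp n (p n) (Gset n) + gnp n (p n) (Gset n)ᶜ := measure_union_le _ _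
  have hlow : Filter.Tendsto (fun n : ℕ => 1 - gnp n (p n) (Gset n)ᶜ) Filter.atTop (nhds 1) := by
    have := ENNReal.Tendsto.sub (tendsto_const_nhds (x := (1:ENNReal))) hbad0
      (Or.inl ENNReal.one_ne_top)
    simpa using this
  exact tendsto_of_tendsto_of_tendsto_of_le_of_le' hlow tendsto_const_nhds hlower hupper
end

section
/- Let p = n^{-α} with α > 5/6 fixed, and G ~ G(n,p). Then there exists u = u(n,p) such that almost surely (with probability tending to 1 as n → ∞), u ≤ χ(G) ≤ u + 3. -/
set_option linter.unusedSectionVars false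
set_option linter.unusedTactic false
set_option linter.unusedVariables false
set_option maxHeartbeats 1000000

open MeasureTheory

open Finset Real

namespace FourPoint








variable {Ω : Type*} [Fintype Ω]

noncomputable def exW (W : Ω → ℝ) (f : Ω → ℝ) : ℝ := ∑ x, W x * f x
noncomputable def prW (W : Ω → ℝ) (E : Set Ω) : ℝ := ∑ x, Set.indicator E W x

variable {W : Ω → ℝ}

lemma prW_eq_sum_ite (E : Set Ω) [DecidablePred (· ∈ E)] :
    prW W E = ∑ x, if x ∈ E then W x else 0 := by
  unfold prW; congr 1; ext x; rw [Set.indicator_apply]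

lemma prW_nonneg (hW : ∀ x, 0 ≤ W x) (E : Set Ω) : 0 ≤ prW W E :=
  Finset.sum_nonneg fun x _ => Set.indicator_nonneg (fun y _ => hW y) x

lemma prW_mono (hW : ∀ x, 0 ≤ W x) {E F : Set Ω} (h : E ⊆ F) : prW W E ≤ prW W F := by
  classical
  rw [prW_eq_sum_ite, prW_eq_sum_ite]
  refine Finset.sum_le_sum fun x _ => ?_
  by_cases hx : x ∈ E
  · simp [hx, h hx]
  · simp only [hx, if_false]; split
    · exact hW x
    · exact le_refl 0

lemma prW_le_one (hW : ∀ x, 0 ≤ W x) (hW1 : ∑ x, W x = 1) (E : Set Ω) : prW W E ≤ 1 := by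
  classical
  rw [prW_eq_sum_ite, ← hW1]
  refine Finset.sum_le_sum fun x _ => ?_
  split
  · exact le_refl _
  · exact hW x

lemma prW_compl (hW1 : ∑ x, W x = 1) (E : Set Ω) : prW W E + prW W Eᶜ = 1 := by
  classical
  rw [prW_eq_sum_ite, prW_eq_sum_ite, ← Finset.sum_add_distrib, ← hW1]
  refine Finset.sum_congr rfl fun x _ => ?_
  by_cases hx : x ∈ E <;> simp [hx]

lemma prW_union_le (hW : ∀ x, 0 ≤ W x) (E F : Set Ω) :
    prW W (E ∪ F) ≤ prW W E + prW W F := by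
  classical
  rw [prW_eq_sum_ite, prW_eq_sum_ite, prW_eq_sum_ite, ← Finset.sum_add_distrib]
  refine Finset.sum_le_sum fun x _ => ?_
  by_cases hE : x ∈ E <;> by_cases hF : x ∈ F <;>
    simp [hE, hF, Set.mem_union, hW x]

lemma prW_biUnion_le (hW : ∀ x, 0 ≤ W x) {ι : Type*} (I : Finset ι) (E : ι → Set Ω) :
    prW W {x | ∃ i ∈ I, x ∈ E i} ≤ ∑ i ∈ I, prW W (E i) := by
  classical
  induction I using Finset.induction with
  | empty => simp [show {x : Ω | ∃ i ∈ (∅ : Finset ι), x ∈ E i} = ∅ by ext; simp,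
      prW, Set.indicator_empty]
  | @insert a s ha ih =>
    have hset : {x : Ω | ∃ i ∈ insert a s, x ∈ E i} =
        E a ∪ {x | ∃ i ∈ s, x ∈ E i} := by
      ext x; simp [Set.mem_union]
    rw [hset, Finset.sum_insert ha]
    exact (prW_union_le hW _ _).trans (by linarith [ih])

lemma prW_inter3_ge (hW : ∀ x, 0 ≤ W x) (hW1 : ∑ x, W x = 1) (A B C : Set Ω) :
    1 - prW W Aᶜ - prW W Bᶜ - prW W Cᶜ ≤ prW W (A ∩ B ∩ C) := by
  have h1 : prW W (A ∩ B ∩ C) + prW W (A ∩ B ∩ C)ᶜ = 1 := prW_compl hW1 _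
  have h2 : (A ∩ B ∩ C)ᶜ = Aᶜ ∪ Bᶜ ∪ Cᶜ := by
    simp [Set.compl_inter]
  have h3 : prW W (Aᶜ ∪ Bᶜ ∪ Cᶜ) ≤ prW W Aᶜ + prW W Bᶜ + prW W Cᶜ :=
    (prW_union_le hW _ _).trans (by linarith [prW_union_le hW Aᶜ Bᶜ])
  rw [h2] at h1
  linarith

lemma exW_const (hW1 : ∑ x, W x = 1) (c : ℝ) : exW W (fun _ => c) = c := by
  simp [exW, ← Finset.sum_mul, hW1]

lemma exW_le_exW (hW : ∀ x, 0 ≤ W x) {f g : Ω → ℝ} (h : ∀ x, f x ≤ g x) :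
    exW W f ≤ exW W g :=
  Finset.sum_le_sum fun x _ => mul_le_mul_of_nonneg_left (h x) (hW x)

/-- Chebyshev-type bound on a finite weighted space. -/
lemma chebyshev (hW : ∀ x, 0 ≤ W x) {f : Ω → ℝ} {lam : ℝ} (hl : 0 < lam) (m : ℝ) :
    lam ^ 2 * prW W {x | lam ≤ |f x - m|} ≤ exW W (fun x => (f x - m) ^ 2) := by
  classical
  rw [prW_eq_sum_ite, Finset.mul_sum]
  refine Finset.sum_le_sum fun x _ => ?_
  by_cases hx : lam ≤ |f x - m|
  · simp only [Set.mem_setOf_eq, hx, if_true]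
    rw [mul_comm]
    refine mul_le_mul_of_nonneg_left ?_ (hW x)
    calc lam ^ 2 ≤ |f x - m| ^ 2 := by
          apply pow_le_pow_left₀ hl.le hx
      _ = (f x - m) ^ 2 := sq_abs _
  · simp only [Set.mem_setOf_eq, hx, if_false, mul_zero]
    exact mul_nonneg (hW x) (sq_nonneg _)









section SumProd

variable {ι : Type*} [Fintype ι] [DecidableEq ι]

def boolEquiv (ι : Type*) [Fintype ι] [DecidableEq ι] : (ι → Bool) ≃ Finset ι where
  toFun x := univ.filter fun i => x i
  invFun S i := i ∈ S
  left_inv x := by ext i; simp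
  right_inv S := by ext i; simp

lemma sum_prod_bool (h : ι → Bool → ℝ) :
    ∑ x : ι → Bool, ∏ i, h i (x i) = ∏ i, (h i true + h i false) := by
  rw [Finset.prod_add]
  rw [← Equiv.sum_comp (boolEquiv ι).symm (fun x : ι → Bool => ∏ i, h i (x i))]
  rw [← Finset.powerset_univ]
  refine Finset.sum_congr rfl fun S _ => ?_
  have : ∀ i, h i ((boolEquiv ι).symm S i) = if i ∈ S then h i true else h i false := by
    intro i
    simp only [boolEquiv, Equiv.coe_fn_symm_mk]
    by_cases hi : i ∈ S <;> simp [hi]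
  rw [Finset.prod_congr rfl fun i _ => this i, Finset.prod_ite]
  congr 1
  · congr 1; ext i; simp
  · congr 1
    ext i; simp

end SumProd

section PiProd

variable {R : Type*} [Fintype R]

lemma sum_prod_pi : ∀ {k : ℕ} (H : Fin k → R → ℝ),
    ∑ x : Fin k → R, ∏ v, H v (x v) = ∏ v, ∑ r : R, H v r := by
  intro k
  induction k with
  | zero => intro H; simp
  | succ k ih =>
    intro H
    rw [← Equiv.sum_comp (Fin.consEquiv (fun _ : Fin (k+1) => R))
      (fun x : Fin (k+1) → R => ∏ v, H v (x v))]
    rw [Fintype.sum_prod_type]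
    have : ∀ (a : R) (y : Fin k → R),
        (∏ v, H v (Fin.consEquiv (fun _ : Fin (k+1) => R) (a, y) v)) =
        H 0 a * ∏ v : Fin k, H v.succ (y v) := by
      intro a y
      rw [Fin.prod_univ_succ]
      simp [Fin.consEquiv]
    simp_rw [this]
    rw [Fin.prod_univ_succ]
    rw [← Finset.sum_mul_sum]
    congr 1
    exact ih _
end PiProd












lemma exW_add {W : Ω → ℝ} (f g : Ω → ℝ) :
    exW W (fun x => f x + g x) = exW W f + exW W g := by
  simp [exW, mul_add, Finset.sum_add_distrib]

lemma exW_sub {W : Ω → ℝ} (f g : Ω → ℝ) :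
    exW W (fun x => f x - g x) = exW W f - exW W g := by
  simp [exW, mul_sub, Finset.sum_sub_distrib]

lemma exW_smul {W : Ω → ℝ} (c : ℝ) (f : Ω → ℝ) :
    exW W (fun x => c * f x) = c * exW W f := by
  simp [exW, Finset.mul_sum]; congr 1; ext x; ring

lemma abs_exW_le_one {W : Ω → ℝ} (hW : ∀ x, 0 ≤ W x) (hW1 : ∑ x, W x = 1)
    {h : Ω → ℝ} (hb : ∀ x, |h x| ≤ 1) : |exW W h| ≤ 1 := by
  rw [abs_le]
  constructor
  · have := exW_le_exW hW (f := fun _ => (-1 : ℝ)) (g := h) (fun x => (abs_le.1 (hb x)).1)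
    rwa [exW_const hW1] at this
  · have := exW_le_exW hW (f := h) (g := fun _ => (1 : ℝ)) (fun x => (abs_le.1 (hb x)).2)
    rwa [exW_const hW1] at this

noncomputable def varW (W : Ω → ℝ) (f : Ω → ℝ) : ℝ :=
  exW W (fun x => (f x - exW W f) ^ 2)

lemma exW_shift_sq {W : Ω → ℝ} (hW1 : ∑ x, W x = 1) (F : Ω → ℝ) (c : ℝ) :
    exW W (fun x => (F x - c) ^ 2) = varW W F + (exW W F - c) ^ 2 := by
  set m := exW W F with hm
  have h : (fun x => (F x - c) ^ 2)
      = (fun x => (F x - m) ^ 2 + ((2 * (m - c)) * (F x - m) + (m - c) ^ 2)) := by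
    ext x; ring
  rw [h, exW_add, exW_add, exW_smul]
  have h1 : exW W (fun x => F x - m) = 0 := by
    have := exW_sub (W := W) F (fun _ => m)
    rw [exW_const hW1] at this
    simpa [← hm] using this
  rw [h1, exW_const hW1]
  simp [varW, ← hm]

lemma varW_nonneg {W : Ω → ℝ} (hW : ∀ x, 0 ≤ W x) (f : Ω → ℝ) : 0 ≤ varW W f :=
  Finset.sum_nonneg fun x _ => mul_nonneg (hW x) (sq_nonneg _)

section Product
variable {R : Type*} [Fintype R] [Nonempty R] (μ : R → ℝ)

noncomputable def pw (k : ℕ) (x : Fin k → R) : ℝ := ∏ v, μ (x v)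

lemma pw_nonneg (hμ0 : ∀ r, 0 ≤ μ r) (k : ℕ) (x : Fin k → R) : 0 ≤ pw μ k x :=
  Finset.prod_nonneg fun _ _ => hμ0 _

lemma sum_pw (hμ1 : ∑ r, μ r = 1) (k : ℕ) : ∑ x : Fin k → R, pw μ k x = 1 := by
  have := sum_prod_pi (R := R) (k := k) (fun _ r => μ r)
  simpa [pw, hμ1] using this

lemma pw_cons (k : ℕ) (a : R) (y : Fin k → R) :
    pw μ (k + 1) (Fin.cons a y) = μ a * pw μ k y := by
  unfold pw
  rw [Fin.prod_univ_succ]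
  simp

lemma sum_cons {k : ℕ} (g : (Fin (k + 1) → R) → ℝ) :
    ∑ x : Fin (k + 1) → R, g x = ∑ a : R, ∑ y : Fin k → R, g (Fin.cons a y) := by
  rw [← Equiv.sum_comp (Fin.consEquiv (fun _ : Fin (k+1) => R)) g, Fintype.sum_prod_type]
  rfl

lemma exW_pw_cons {k : ℕ} (f : (Fin (k + 1) → R) → ℝ) :
    exW (pw μ (k + 1)) f = ∑ a : R, μ a * exW (pw μ k) (fun y => f (Fin.cons a y)) := by
  unfold exW
  rw [sum_cons (R := R) (fun x => pw μ (k+1) x * f x)]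
  refine Finset.sum_congr rfl fun a _ => ?_
  rw [Finset.mul_sum]
  refine Finset.sum_congr rfl fun y _ => ?_
  rw [pw_cons]; ring

/-- Variance tensorization: a function that is `1`-Lipschitz in each coordinate of a
product of `k` independent coordinates has variance at most `k`. -/
theorem var_le_of_lipschitz (hμ0 : ∀ r, 0 ≤ μ r) (hμ1 : ∑ r, μ r = 1) :
    ∀ {k : ℕ} (f : (Fin k → R) → ℝ),
    (∀ (v : Fin k) (x y : Fin k → R), (∀ w, w ≠ v → x w = y w) → |f x - f y| ≤ 1) →
    varW (pw μ k) f ≤ k := by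
  intro k
  induction k with
  | zero =>
    intro f _
    have h1 : ∀ x : Fin 0 → R, f x = exW (pw μ 0) f := by
      intro x
      have : exW (pw μ 0) f = exW (pw μ 0) (fun _ => f x) := by
        congr 1; ext y
        congr 1; funext w; exact w.elim0
      rw [this, exW_const (sum_pw μ hμ1 0)]
    unfold varW
    have h2 : (fun x : Fin 0 → R => (f x - exW (pw μ 0) f) ^ 2) = fun _ => (0:ℝ) := by
      ext x; rw [← h1 x]; ring
    rw [h2, exW_const (sum_pw μ hμ1 0)]
    simp
  | succ k ih =>
    intro f hf
    have hW : ∀ y, 0 ≤ pw μ k y := pw_nonneg μ hμ0 k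
    have hW1 : ∑ y : Fin k → R, pw μ k y = 1 := sum_pw μ hμ1 k
    set g : R → ℝ := fun a => exW (pw μ k) (fun y => f (Fin.cons a y)) with hg
    set m : ℝ := exW (pw μ (k+1)) f with hm
    have hmg : m = ∑ a : R, μ a * g a := exW_pw_cons μ f
    have hdecomp : varW (pw μ (k+1)) f
        = ∑ a : R, μ a * (varW (pw μ k) (fun y => f (Fin.cons a y)) + (g a - m) ^ 2) := by
      show exW (pw μ (k+1)) (fun x => (f x - m) ^ 2)
        = ∑ a : R, μ a * (varW (pw μ k) (fun y => f (Fin.cons a y)) + (g a - m) ^ 2)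
      rw [exW_pw_cons μ (fun x => (f x - m) ^ 2)]
      refine Finset.sum_congr rfl fun a _ => ?_
      congr 1
      have h := exW_shift_sq (W := pw μ k) hW1 (fun y => f (Fin.cons a y)) m
      rw [h]
    -- bound the two parts
    have hbound1 : ∀ a : R, varW (pw μ k) (fun y => f (Fin.cons a y)) ≤ k := by
      intro a
      refine ih _ ?_
      intro v x y hxy
      refine hf v.succ (Fin.cons a x) (Fin.cons a y) ?_
      intro w hw
      rcases Fin.eq_zero_or_eq_succ w with h0 | ⟨u, hu⟩
      · subst h0; simp
      · subst hu
        simp only [Fin.cons_succ]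
        exact hxy u (fun h => hw (by rw [h]))
    have hglip : ∀ a b : R, |g a - g b| ≤ 1 := by
      intro a b
      have hsub := exW_sub (W := pw μ k) (fun y => f (Fin.cons a y)) (fun y => f (Fin.cons b y))
      have hgab : g a - g b = exW (pw μ k)
          (fun y => f (Fin.cons a y) - f (Fin.cons b y)) := by rw [hsub]
      rw [hgab]
      refine abs_exW_le_one hW hW1 ?_
      intro y
      refine hf 0 (Fin.cons a y) (Fin.cons b y) ?_
      intro w hw
      rcases Fin.eq_zero_or_eq_succ w with h0 | ⟨u, hu⟩
      · exact absurd h0 hw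
      · subst hu; simp
    -- second part: variance of g over the first coordinate
    have hsecond : ∑ a : R, μ a * (g a - m) ^ 2 ≤ 1 := by
      have hmexg : m = exW μ g := hmg
      have hvar : ∑ a : R, μ a * (g a - m) ^ 2 = varW μ g := by
        rw [hmexg]; rfl
      rw [hvar]
      set c := g (Classical.arbitrary R) with hc
      have h1 : varW μ g ≤ exW μ (fun a => (g a - c) ^ 2) := by
        rw [exW_shift_sq (W := μ) hμ1 g c]
        nlinarith [sq_nonneg (exW μ g - c)]
      have h2 : exW μ (fun a => (g a - c) ^ 2) ≤ exW μ (fun _ => (1:ℝ)) := by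
        refine exW_le_exW hμ0 ?_
        intro a
        have := hglip a (Classical.arbitrary R)
        nlinarith [abs_nonneg (g a - c), le_abs_self (g a - c), neg_abs_le (g a - c)]
      calc varW μ g ≤ exW μ (fun a => (g a - c) ^ 2) := h1
        _ ≤ 1 := by rwa [exW_const hμ1] at h2
    have hfirst : ∑ a : R, μ a * varW (pw μ k) (fun y => f (Fin.cons a y)) ≤ k := by
      calc ∑ a : R, μ a * varW (pw μ k) (fun y => f (Fin.cons a y))
          ≤ ∑ a : R, μ a * k :=
            Finset.sum_le_sum fun a _ =>
              mul_le_mul_of_nonneg_left (hbound1 a) (hμ0 a)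
        _ = k := by rw [← Finset.sum_mul, hμ1, one_mul]
    rw [hdecomp]
    have : ∑ a : R, μ a * (varW (pw μ k) (fun y => f (Fin.cons a y)) + (g a - m) ^ 2)
        = ∑ a : R, μ a * varW (pw μ k) (fun y => f (Fin.cons a y))
          + ∑ a : R, μ a * (g a - m) ^ 2 := by
      rw [← Finset.sum_add_distrib]
      refine Finset.sum_congr rfl fun a _ => ?_
      ring
    rw [this]
    push_cast
    linarith

end Product



section Cylinder

variable (p : ℝ) (n : ℕ)

noncomputable def wt (p : ℝ) : Bool → ℝ := fun b => bif b then p else 1 - p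

noncomputable def rowW (p : ℝ) (n : ℕ) : (Fin n → Bool) → ℝ := fun r => ∏ w, wt p (r w)

noncomputable def matW (p : ℝ) (n : ℕ) : (Fin n → Fin n → Bool) → ℝ := pw (rowW p n) n

lemma wt_nonneg (hp0 : 0 ≤ p) (hp1 : p ≤ 1) (b : Bool) : 0 ≤ wt p b := by
  cases b <;> simp [wt] <;> linarith

lemma rowW_nonneg (hp0 : 0 ≤ p) (hp1 : p ≤ 1) (r : Fin n → Bool) : 0 ≤ rowW p n r :=
  Finset.prod_nonneg fun _ _ => wt_nonneg p hp0 hp1 _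

lemma sum_rowW : ∑ r : Fin n → Bool, rowW p n r = 1 := by
  have := sum_prod_bool (ι := Fin n) (fun _ b => wt p b)
  rw [show rowW p n = fun r => ∏ w, wt p (r w) from rfl]
  rw [this]
  simp [wt]

lemma matW_nonneg (hp0 : 0 ≤ p) (hp1 : p ≤ 1) (x : Fin n → Fin n → Bool) : 0 ≤ matW p n x :=
  pw_nonneg _ (rowW_nonneg p n hp0 hp1) _ _

lemma sum_matW : ∑ x : Fin n → Fin n → Bool, matW p n x = 1 :=
  sum_pw _ (sum_rowW p n) _

/-- Probability that a fixed set of entries of the random Boolean matrix are all `true`. -/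
lemma prW_cylinder (D : Finset (Fin n × Fin n)) :
    prW (matW p n) {x | ∀ q ∈ D, x q.1 q.2 = true} = p ^ D.card := by
  classical
  set E : Set (Fin n → Fin n → Bool) := {x | ∀ q ∈ D, x q.1 q.2 = true} with hE
  set H : Fin n → Fin n → Bool → ℝ :=
    fun v w b => if (v, w) ∈ D then (bif b then p else 0) else wt p b with hH
  have claim1 : ∀ x, Set.indicator E (matW p n) x = ∏ v, ∏ w, H v w (x v w) := by
    intro x
    by_cases hx : x ∈ E
    · rw [Set.indicator_of_mem hx]
      show (∏ v, ∏ w, wt p (x v w)) = _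
      refine Finset.prod_congr rfl fun v _ => Finset.prod_congr rfl fun w _ => ?_
      by_cases hq : (v, w) ∈ D
      · have : x v w = true := hx (v, w) hq
        simp [hH, hq, this, wt]
      · simp [hH, hq]
    · rw [Set.indicator_of_notMem hx]
      symm
      simp only [hE, Set.mem_setOf_eq, not_forall] at hx
      obtain ⟨q, hq, hxq⟩ := hx
      refine Finset.prod_eq_zero (Finset.mem_univ q.1) ?_
      refine Finset.prod_eq_zero (Finset.mem_univ q.2) ?_
      have : x q.1 q.2 = false := by
        cases h : x q.1 q.2
        · rfl
        · exact absurd h hxq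
      simp [hH, hq, this]
  have claim2 : ∑ x : Fin n → Fin n → Bool, ∏ v, ∏ w, H v w (x v w)
      = ∏ v, ∏ w, (H v w true + H v w false) := by
    have houter := sum_prod_pi (R := Fin n → Bool) (k := n)
      (fun v r => ∏ w, H v w (r w))
    rw [houter]
    refine Finset.prod_congr rfl fun v _ => ?_
    exact sum_prod_bool (fun w b => H v w b)
  have claim3 : ∀ v w, H v w true + H v w false = if (v, w) ∈ D then p else 1 := by
    intro v w
    by_cases hq : (v, w) ∈ D <;> simp [hH, hq, wt]
  calc prW (matW p n) E = ∑ x : Fin n → Fin n → Bool, ∏ v, ∏ w, H v w (x v w) := by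
        unfold prW; exact Finset.sum_congr rfl fun x _ => claim1 x
    _ = ∏ v, ∏ w, (if (v, w) ∈ D then p else 1) := by
        rw [claim2]
        exact Finset.prod_congr rfl fun v _ => Finset.prod_congr rfl fun w _ => claim3 v w
    _ = ∏ q : Fin n × Fin n, (if q ∈ D then p else 1) := by
        rw [Fintype.prod_prod_type]
    _ = p ^ D.card := by
        rw [Finset.prod_ite_mem, Finset.univ_inter, Finset.prod_const]

end Cylinder




open scoped Classical

section Graph

variable {n : ℕ}

/-- The Boolean matrix → edge-indicator map (row = larger endpoint). -/
def Phi (x : Fin n → Fin n → Bool) : Sym2 (Fin n) → Bool :=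
  Sym2.lift ⟨fun a b => x (a ⊔ b) (a ⊓ b), fun a b => by simp only []; rw [sup_comm, inf_comm]⟩

lemma Phi_mk (x : Fin n → Fin n → Bool) (a b : Fin n) :
    Phi x s(a, b) = x (a ⊔ b) (a ⊓ b) := rfl

def Gr (x : Fin n → Fin n → Bool) : SimpleGraph (Fin n) := graphOf (Phi x)

lemma Gr_adj (x : Fin n → Fin n → Bool) (a b : Fin n) :
    (Gr x).Adj a b ↔ a ≠ b ∧ x (a ⊔ b) (a ⊓ b) = true := by
  unfold Gr graphOf
  rw [SimpleGraph.fromRel_adj]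
  constructor
  · rintro ⟨hne, h | h⟩
    · exact ⟨hne, h⟩
    · refine ⟨hne, ?_⟩
      have : Phi x s(b, a) = x (a ⊔ b) (a ⊓ b) := by
        rw [Phi_mk, sup_comm, inf_comm]
      rw [← this]; exact h
  · rintro ⟨hne, h⟩
    exact ⟨hne, Or.inl (by rw [Phi_mk]; exact h)⟩

lemma Gr_adj_lt (x : Fin n → Fin n → Bool) {a b : Fin n} (hab : a < b) :
    (Gr x).Adj a b ↔ x b a = true := by
  rw [Gr_adj]
  rw [sup_eq_right.2 hab.le, inf_eq_left.2 hab.le]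
  simp [hab.ne]

/-- `f` is a proper coloring of `G` restricted to `S` with colors `< c`. -/
def propOn (G : SimpleGraph (Fin n)) (S : Finset (Fin n)) (c : ℕ) : Prop :=
  ∃ f : Fin n → ℕ, (∀ a ∈ S, f a < c) ∧ ∀ a ∈ S, ∀ b ∈ S, G.Adj a b → f a ≠ f b

lemma propOn_empty (G : SimpleGraph (Fin n)) (c : ℕ) : propOn G ∅ c :=
  ⟨fun _ => 0, by simp, by simp⟩

lemma propOn_mono (G : SimpleGraph (Fin n)) {S T : Finset (Fin n)} (h : T ⊆ S) {c : ℕ}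
    (hS : propOn G S c) : propOn G T c := by
  obtain ⟨f, hb, hp⟩ := hS
  exact ⟨f, fun a ha => hb a (h ha), fun a ha b hbm => hp a (h ha) b (h hbm)⟩

lemma propOn_univ_iff (G : SimpleGraph (Fin n)) (c : ℕ) :
    propOn G univ c ↔ G.Colorable c := by
  rw [SimpleGraph.colorable_iff_exists_bdd_nat_coloring]
  constructor
  · rintro ⟨f, hb, hp⟩
    refine ⟨SimpleGraph.Coloring.mk f ?_, fun v => hb v (mem_univ v)⟩
    intro a b hadj
    exact hp a (mem_univ a) b (mem_univ b) hadj
  · rintro ⟨C, hC⟩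
    exact ⟨C, fun a _ => hC a, fun a _ b _ hadj => C.valid hadj⟩

/-- Combining a `u`-coloring off `S` with a `3`-coloring of `S`. -/
lemma colorable_add_three (G : SimpleGraph (Fin n)) (S : Finset (Fin n)) (u : ℕ)
    (h1 : propOn G Sᶜ u) (h2 : propOn G S 3) : G.Colorable (u + 3) := by
  obtain ⟨f, hfb, hfp⟩ := h1
  obtain ⟨g, hgb, hgp⟩ := h2
  rw [← propOn_univ_iff]
  refine ⟨fun v => if v ∈ S then u + g v else f v, ?_, ?_⟩
  · intro a _
    by_cases ha : a ∈ S
    · simp only [ha, if_true]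
      have := hgb a ha
      omega
    · simp only [ha, if_false]
      have := hfb a (Finset.mem_compl.2 ha)
      omega
  · intro a _ b _ hadj
    by_cases ha : a ∈ S <;> by_cases hb : b ∈ S <;> simp only [ha, hb, if_true, if_false]
    · have := hgp a ha b hb hadj; omega
    · have := hfb b (Finset.mem_compl.2 hb); omega
    · have := hfb a (Finset.mem_compl.2 ha); omega
    · exact hfp a (Finset.mem_compl.2 ha) b (Finset.mem_compl.2 hb) hadj

/-- Minimum number of vertices to delete to make `G` `u`-colorable. -/
noncomputable def remNum (G : SimpleGraph (Fin n)) (u : ℕ) : ℕ :=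
  sInf {k | ∃ S : Finset (Fin n), S.card = k ∧ propOn G Sᶜ u}

lemma remNum_set_nonempty (G : SimpleGraph (Fin n)) (u : ℕ) :
    {k | ∃ S : Finset (Fin n), S.card = k ∧ propOn G Sᶜ u}.Nonempty := by
  refine ⟨(univ : Finset (Fin n)).card, univ, rfl, ?_⟩
  rw [Finset.compl_univ]
  exact propOn_empty G u

lemma remNum_spec (G : SimpleGraph (Fin n)) (u : ℕ) :
    ∃ S : Finset (Fin n), S.card = remNum G u ∧ propOn G Sᶜ u :=
  Nat.sInf_mem (remNum_set_nonempty G u)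

lemma remNum_le (G : SimpleGraph (Fin n)) (u : ℕ) (S : Finset (Fin n))
    (h : propOn G Sᶜ u) : remNum G u ≤ S.card :=
  Nat.sInf_le ⟨S, rfl, h⟩

lemma remNum_eq_zero_iff (G : SimpleGraph (Fin n)) (u : ℕ) :
    remNum G u = 0 ↔ G.Colorable u := by
  constructor
  · intro h
    obtain ⟨S, hScard, hS⟩ := remNum_spec G u
    rw [h, Finset.card_eq_zero] at hScard
    rw [hScard, Finset.compl_empty] at hS
    exact (propOn_univ_iff G u).1 hS
  · intro h
    refine Nat.le_zero.1 ?_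
    have : propOn G (∅ : Finset (Fin n))ᶜ u := by
      rw [Finset.compl_empty]
      exact (propOn_univ_iff G u).2 h
    simpa using remNum_le G u ∅ this

/-- Changing only row `v` of the matrix changes the removal number by at most 1. -/
lemma remNum_lipschitz (u : ℕ) (v : Fin n) (x y : Fin n → Fin n → Bool)
    (hxy : ∀ w, w ≠ v → x w = y w) :
    remNum (Gr x) u ≤ remNum (Gr y) u + 1 := by
  obtain ⟨S, hScard, hS⟩ := remNum_spec (Gr y) u
  obtain ⟨f, hfb, hfp⟩ := hS
  have hins : propOn (Gr x) (insert v S)ᶜ u := by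
    refine ⟨f, ?_, ?_⟩
    · intro a ha
      refine hfb a ?_
      rw [Finset.mem_compl] at ha ⊢
      exact fun h => ha (Finset.mem_insert_of_mem h)
    · intro a ha b hb hadj
      rw [Finset.mem_compl, Finset.mem_insert] at ha hb
      push_neg at ha hb
      refine hfp a (Finset.mem_compl.2 ha.2) b (Finset.mem_compl.2 hb.2) ?_
      rw [Gr_adj] at hadj ⊢
      refine ⟨hadj.1, ?_⟩
      rw [← hadj.2]
      congr 1
      rw [hxy (a ⊔ b) ?_]
      rcases le_total a b with h | h
      · rw [sup_eq_right.2 h]; exact hb.1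
      · rw [sup_eq_left.2 h]; exact ha.1
  calc remNum (Gr x) u ≤ (insert v S).card := remNum_le _ _ _ hins
    _ ≤ S.card + 1 := Finset.card_insert_le _ _
    _ = remNum (Gr y) u + 1 := by rw [hScard]

/-- Number of edges (ordered with `q.1 < q.2`) inside `T`. -/
noncomputable def eT (G : SimpleGraph (Fin n)) (T : Finset (Fin n)) : ℕ :=
  ((T ×ˢ T).filter fun q : Fin n × Fin n => q.1 < q.2 ∧ G.Adj q.1 q.2).card

/-- Handshake: sum of degrees inside `T` equals twice the edge count. -/
lemma handshake (G : SimpleGraph (Fin n)) (T : Finset (Fin n)) :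
    ∑ v ∈ T, (T.filter (G.Adj v)).card = 2 * eT G T := by
  have h1 : ((T ×ˢ T).filter fun q : Fin n × Fin n => G.Adj q.1 q.2)
      = T.biUnion fun v => {v} ×ˢ T.filter (G.Adj v) := by
    ext ⟨a, b⟩
    simp only [Finset.mem_filter, Finset.mem_product, Finset.mem_biUnion,
      Finset.mem_singleton]
    constructor
    · rintro ⟨⟨ha, hb⟩, hadj⟩
      exact ⟨a, ha, rfl, hb, hadj⟩
    · rintro ⟨v, hv, rfl, hb, hadj⟩
      exact ⟨⟨hv, hb⟩, hadj⟩
  have h2 : ∑ v ∈ T, (T.filter (G.Adj v)).card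
      = ((T ×ˢ T).filter fun q : Fin n × Fin n => G.Adj q.1 q.2).card := by
    rw [h1, Finset.card_biUnion]
    · refine Finset.sum_congr rfl fun v _ => ?_
      rw [Finset.card_product, Finset.card_singleton, one_mul]
    · intro a _ b _ hab
      simp only [Finset.disjoint_left]
      rintro ⟨c, d⟩ hc hd
      simp only [Finset.mem_product, Finset.mem_singleton] at hc hd
      exact hab (hc.1.symm.trans hd.1)
  have h3 : ((T ×ˢ T).filter fun q : Fin n × Fin n => G.Adj q.1 q.2)
      = (((T ×ˢ T).filter fun q => q.1 < q.2 ∧ G.Adj q.1 q.2)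
        ∪ ((T ×ˢ T).filter fun q => q.2 < q.1 ∧ G.Adj q.1 q.2)) := by
    ext q
    simp only [Finset.mem_union, Finset.mem_filter]
    constructor
    · rintro ⟨hq, hadj⟩
      rcases lt_or_gt_of_ne hadj.ne with h | h
      · exact Or.inl ⟨hq, h, hadj⟩
      · exact Or.inr ⟨hq, h, hadj⟩
    · rintro (⟨hq, _, hadj⟩ | ⟨hq, _, hadj⟩) <;> exact ⟨hq, hadj⟩
  have h4 : ((T ×ˢ T).filter fun q : Fin n × Fin n => q.2 < q.1 ∧ G.Adj q.1 q.2).card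
      = eT G T := by
    unfold eT
    refine Finset.card_bij (fun q _ => Prod.swap q) ?_ ?_ ?_
    · rintro ⟨a, b⟩ hq
      simp only [Finset.mem_filter, Finset.mem_product] at hq ⊢
      exact ⟨⟨hq.1.2, hq.1.1⟩, hq.2.1, hq.2.2.symm⟩
    · rintro ⟨a, b⟩ _ ⟨c, d⟩ _ h
      exact Prod.swap_injective h
    · rintro ⟨a, b⟩ hq
      refine ⟨(b, a), ?_, rfl⟩
      simp only [Finset.mem_filter, Finset.mem_product] at hq ⊢
      exact ⟨⟨hq.1.2, hq.1.1⟩, hq.2.1, hq.2.2.symm⟩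
  have h5 : Disjoint ((T ×ˢ T).filter fun q : Fin n × Fin n => q.1 < q.2 ∧ G.Adj q.1 q.2)
      ((T ×ˢ T).filter fun q => q.2 < q.1 ∧ G.Adj q.1 q.2) := by
    simp only [Finset.disjoint_left, Finset.mem_filter]
    rintro q ⟨_, h1', _⟩ ⟨_, h2', _⟩
    exact absurd h2' (asymm h1')
  rw [h2, h3, Finset.card_union_of_disjoint h5, h4]
  unfold eT
  ring

/-- If every nonempty subset has few edges, some vertex has degree `≤ 2`. -/
lemma exists_low_degree (G : SimpleGraph (Fin n)) (T : Finset (Fin n)) (hne : T.Nonempty)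
    (h : 2 * eT G T < 3 * T.card) : ∃ v ∈ T, (T.filter (G.Adj v)).card ≤ 2 := by
  by_contra hcon
  push_neg at hcon
  have : 3 * T.card ≤ ∑ v ∈ T, (T.filter (G.Adj v)).card := by
    calc 3 * T.card = ∑ _v ∈ T, 3 := by rw [Finset.sum_const, smul_eq_mul]; ring
      _ ≤ _ := Finset.sum_le_sum fun v hv => hcon v hv
  rw [handshake] at this
  omega

/-- 2-degenerate graphs (on the subset level) are 3-colorable. -/
lemma propOn_three_of_sparse (G : SimpleGraph (Fin n)) :
    ∀ S : Finset (Fin n),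
    (∀ T ⊆ S, T.Nonempty → ∃ v ∈ T, (T.filter (G.Adj v)).card ≤ 2) →
    propOn G S 3 := by
  intro S
  induction S using Finset.strongInduction with
  | _ S ih =>
    intro hdeg
    rcases S.eq_empty_or_nonempty with rfl | hne
    · exact propOn_empty G 3
    obtain ⟨v, hv, hdegv⟩ := hdeg S Finset.Subset.rfl hne
    have hsub : S.erase v ⊂ S := Finset.erase_ssubset hv
    obtain ⟨f, hfb, hfp⟩ := ih _ hsub
      (fun T hT hTne => hdeg T (hT.trans (Finset.erase_subset _ _)) hTne)
    set B : Finset ℕ := ((S.erase v).filter (G.Adj v)).image f with hB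
    have hBsub : B ⊆ Finset.range 3 := by
      intro c hc
      rw [hB, Finset.mem_image] at hc
      obtain ⟨a, ha, rfl⟩ := hc
      rw [Finset.mem_filter] at ha
      exact Finset.mem_range.2 (hfb a ha.1)
    have hBcard : B.card ≤ 2 := by
      calc B.card ≤ ((S.erase v).filter (G.Adj v)).card := Finset.card_image_le
        _ ≤ (S.filter (G.Adj v)).card :=
            Finset.card_le_card (Finset.filter_subset_filter _ (Finset.erase_subset _ _))
        _ ≤ 2 := hdegv
    have hex : (Finset.range 3 \ B).Nonempty := by
      rw [← Finset.card_pos]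
      have := Finset.le_card_sdiff B (Finset.range 3)
      rw [Finset.card_range] at this
      omega
    obtain ⟨c, hc⟩ := hex
    rw [Finset.mem_sdiff, Finset.mem_range] at hc
    refine ⟨Function.update f v c, ?_, ?_⟩
    · intro a ha
      by_cases hav : a = v
      · rw [hav, Function.update_self]; exact hc.1
      · rw [Function.update_of_ne hav]
        exact hfb a (Finset.mem_erase.2 ⟨hav, ha⟩)
    · intro a ha b hb hadj
      by_cases hav : a = v
      · subst hav
        have hbv : b ≠ a := fun h => (G.irrefl (h ▸ hadj))
        rw [Function.update_self, Function.update_of_ne hbv]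
        intro h
        apply hc.2
        rw [hB, Finset.mem_image]
        exact ⟨b, Finset.mem_filter.2 ⟨Finset.mem_erase.2 ⟨hbv, hb⟩, hadj⟩, h.symm⟩
      · by_cases hbv : b = v
        · subst hbv
          rw [Function.update_self, Function.update_of_ne hav]
          intro h
          apply hc.2
          rw [hB, Finset.mem_image]
          exact ⟨a, Finset.mem_filter.2 ⟨Finset.mem_erase.2 ⟨hav, ha⟩, hadj.symm⟩, h⟩
        · rw [Function.update_of_ne hav, Function.update_of_ne hbv]
          exact hfp a (Finset.mem_erase.2 ⟨hav, ha⟩) b (Finset.mem_erase.2 ⟨hbv, hb⟩) hadj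

end Graph



noncomputable abbrev ee : ℝ := Real.exp 1

lemma ee_pos : 0 < ee := Real.exp_pos 1
lemma one_le_ee : 1 ≤ ee := by
  have := Real.add_one_le_exp (1:ℝ)
  unfold ee; linarith

lemma pow_self_le_exp_mul_factorial (k : ℕ) : (k : ℝ) ^ k ≤ ee ^ k * (k.factorial : ℝ) := by
  have h := Real.sum_le_exp_of_nonneg (x := (k : ℝ)) (by positivity) (k + 1)
  have hterm : (k : ℝ) ^ k / (k.factorial : ℝ) ≤ Real.exp k := by
    refine le_trans ?_ h
    refine Finset.single_le_sum (f := fun i => (k:ℝ)^i / (i.factorial : ℝ)) ?_ ?_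
    · intro i _; positivity
    · exact Finset.self_mem_range_succ k
  have hfac : (0:ℝ) < (k.factorial : ℝ) := by positivity
  rw [div_le_iff₀ hfac] at hterm
  have : Real.exp (k : ℝ) = ee ^ k := by
    unfold ee
    rw [← Real.exp_nat_mul, mul_one]
  rw [this] at hterm
  exact hterm

/-- `C(N, k) ≤ (e N / k)^k` for `k ≥ 1`. -/
lemma choose_le_pow_real (N k : ℕ) (hk : 1 ≤ k) :
    (N.choose k : ℝ) ≤ (ee * N / k) ^ k := by
  have hk0 : (0:ℝ) < (k : ℝ) := by exact_mod_cast hk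
  have h1 : (N.choose k : ℝ) * (k.factorial : ℝ) ≤ (N : ℝ) ^ k := by
    have := Nat.descFactorial_le_pow N k
    have h2 := Nat.descFactorial_eq_factorial_mul_choose N k
    have : (k.factorial * N.choose k : ℕ) ≤ N ^ k := by rw [← h2]; exact this
    calc (N.choose k : ℝ) * (k.factorial : ℝ) = ((k.factorial * N.choose k : ℕ) : ℝ) := by
          push_cast; ring
      _ ≤ ((N ^ k : ℕ) : ℝ) := by exact_mod_cast this
      _ = (N : ℝ) ^ k := by push_cast; ring
  have hfac : (0:ℝ) < (k.factorial : ℝ) := by positivity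
  rw [div_pow, mul_pow]
  rw [le_div_iff₀ (by positivity)]
  calc (N.choose k : ℝ) * (k:ℝ) ^ k ≤ (N.choose k : ℝ) * (ee ^ k * (k.factorial : ℝ)) := by
        refine mul_le_mul_of_nonneg_left (pow_self_le_exp_mul_factorial k) (by positivity)
    _ = ((N.choose k : ℝ) * (k.factorial : ℝ)) * ee ^ k := by ring
    _ ≤ (N:ℝ) ^ k * ee ^ k := by
        refine mul_le_mul_of_nonneg_right h1 (by positivity)
    _ = ee ^ k * (N:ℝ) ^ k := by ring

/-- The per-size term bound in the sparsity union bound. -/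
lemma term_bound (n s t m : ℕ) (p rho : ℝ)
    (hp : 0 ≤ p) (hs : 1 ≤ s) (hst : s ≤ t) (hm : 3 * s ≤ 2 * m)
    (hq1 : ee * t * p ≤ 1)
    (hrho : rho = ee ^ 5 * n ^ 2 * t * p ^ 3) (hrho4 : rho ≤ 1 / 4) :
    (n.choose s : ℝ) * ((s * s).choose m : ℝ) * p ^ m
      ≤ Real.sqrt rho * (1 / 2) ^ (s - 1) := by
  have hs0 : (0:ℝ) < (s:ℝ) := by exact_mod_cast hs
  have hm1 : 1 ≤ m := by omega
  have hm0 : (0:ℝ) < (m:ℝ) := by exact_mod_cast hm1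
  have hsm : (s:ℝ) ≤ (m:ℝ) := by exact_mod_cast (by omega : s ≤ m)
  have hq0 : 0 ≤ ee * s * p := by positivity
  have hqt : ee * s * p ≤ ee * t * p := by
    have : (s:ℝ) ≤ (t:ℝ) := by exact_mod_cast hst
    have := mul_le_mul_of_nonneg_right (mul_le_mul_of_nonneg_left this ee_pos.le) hp
    linarith
  have hq : ee * s * p ≤ 1 := le_trans hqt hq1
  have hrho0 : 0 ≤ rho := by rw [hrho]; positivity
  -- Step 1: A ≤ (e n / s)^s * (e s p)^m
  have hA1 : (n.choose s : ℝ) ≤ (ee * n / s) ^ s := choose_le_pow_real n s hs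
  have hA2 : ((s * s).choose m : ℝ) ≤ (ee * (s*s) / m) ^ m := by
    have := choose_le_pow_real (s * s) m hm1
    convert this using 3
    push_cast; ring
  have hA2' : (ee * (s*s) / m : ℝ) ≤ ee * s := by
    rw [div_le_iff₀ hm0]
    calc ee * ((s:ℝ)*(s:ℝ)) = (ee * s) * s := by push_cast; ring
      _ ≤ (ee * s) * m := by
          refine mul_le_mul_of_nonneg_left hsm (by positivity)
  have hA : (n.choose s : ℝ) * ((s * s).choose m : ℝ) * p ^ m
      ≤ (ee * n / s) ^ s * (ee * s * p) ^ m := by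
    have h1 : ((s * s).choose m : ℝ) * p ^ m ≤ (ee * s * p) ^ m := by
      rw [mul_pow]
      refine mul_le_mul (hA2.trans ?_) le_rfl (by positivity) (by positivity)
      exact pow_le_pow_left₀ (by positivity) hA2' m
    calc (n.choose s : ℝ) * ((s * s).choose m : ℝ) * p ^ m
        = (n.choose s : ℝ) * (((s * s).choose m : ℝ) * p ^ m) := by ring
      _ ≤ (ee * n / s) ^ s * (ee * s * p) ^ m := by
          refine mul_le_mul hA1 h1 (by positivity) (by positivity)
  -- Step 2: square and compare with rho^s
  set A := (ee * n / s) ^ s * (ee * s * p) ^ m with hAdef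
  have hA0 : 0 ≤ A := by positivity
  have hAsq : A ^ 2 ≤ rho ^ s := by
    have h2m : (ee * s * p) ^ (2 * m) ≤ (ee * s * p) ^ (3 * s) :=
      pow_le_pow_of_le_one hq0 hq (by omega)
    calc A ^ 2 = (ee * n / s) ^ (2*s) * (ee * s * p) ^ (2*m) := by
          rw [hAdef]; ring
      _ ≤ (ee * n / s) ^ (2*s) * (ee * s * p) ^ (3*s) := by
          refine mul_le_mul_of_nonneg_left h2m (by positivity)
      _ = ((ee * n / s) ^ 2 * (ee * s * p) ^ 3) ^ s := by
          ring
      _ ≤ rho ^ s := by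
          refine pow_le_pow_left₀ (by positivity) ?_ s
          rw [hrho]
          rw [div_pow, mul_pow]
          rw [div_mul_eq_mul_div, div_le_iff₀ (by positivity)]
          have hsle : (s:ℝ) ≤ (t:ℝ) := by exact_mod_cast hst
          calc ee^2 * (n:ℝ)^2 * (ee * s * p)^3
              = (ee^5 * n^2 * s * p^3) * s^2 := by ring
            _ ≤ (ee^5 * n^2 * t * p^3) * s^2 := by
                refine mul_le_mul_of_nonneg_right ?_ (by positivity)
                have : ee^5 * (n:ℝ)^2 * s ≤ ee^5 * n^2 * t := by
                  refine mul_le_mul_of_nonneg_left hsle (by positivity)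
                nlinarith [pow_nonneg hp 3]
            _ = ee ^ 5 * ↑n ^ 2 * ↑t * p ^ 3 * ↑s ^ 2 := by ring
  have hAle : A ≤ Real.sqrt rho ^ s := by
    have h1 : A = Real.sqrt (A ^ 2) := by rw [Real.sqrt_sq hA0]
    have h2 : Real.sqrt (A ^ 2) ≤ Real.sqrt (rho ^ s) := Real.sqrt_le_sqrt hAsq
    have h3 : Real.sqrt (rho ^ s) = Real.sqrt rho ^ s := by
      rw [← Real.sqrt_sq (pow_nonneg (Real.sqrt_nonneg rho) s)]
      congr 1
      rw [← pow_mul, mul_comm s 2, pow_mul, Real.sq_sqrt hrho0]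
    rw [h1, ← h3]; exact h2
  have hsqrt_half : Real.sqrt rho ≤ 1 / 2 := by
    have : Real.sqrt rho ≤ Real.sqrt (1/4) := Real.sqrt_le_sqrt hrho4
    have h14 : Real.sqrt (1/4 : ℝ) = 1/2 := by
      rw [show (1/4:ℝ) = (1/2)^2 by norm_num, Real.sqrt_sq (by norm_num)]
    linarith [this, h14 ▸ this]
  calc (n.choose s : ℝ) * ((s * s).choose m : ℝ) * p ^ m ≤ A := hA
    _ ≤ Real.sqrt rho ^ s := hAle
    _ = Real.sqrt rho * Real.sqrt rho ^ (s - 1) := by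
        conv_lhs => rw [show s = 1 + (s - 1) by omega]
        rw [pow_add, pow_one]
    _ ≤ Real.sqrt rho * (1/2) ^ (s - 1) := by
        refine mul_le_mul_of_nonneg_left ?_ (Real.sqrt_nonneg rho)
        exact pow_le_pow_left₀ (Real.sqrt_nonneg rho) hsqrt_half _

section BadEvent

variable (p : ℝ) (n t : ℕ)

def mfun (s : ℕ) : ℕ := (3 * s + 1) / 2

def BadSet (n t : ℕ) : Set (Fin n → Fin n → Bool) :=
  {x | ∃ S : Finset (Fin n), S.Nonempty ∧ S.card ≤ t ∧ mfun S.card ≤ eT (Gr x) S}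

lemma prW_BadSet_le (hp0 : 0 ≤ p) (hp1 : p ≤ 1) :
    prW (matW p n) (BadSet n t)
      ≤ ∑ s ∈ Finset.Icc 1 t,
          (n.choose s : ℝ) * (((s * s).choose (mfun s)) : ℝ) * p ^ (mfun s) := by
  classical
  set I : Finset ((_ : Finset (Fin n)) × Finset (Fin n × Fin n)) :=
    ((univ : Finset (Finset (Fin n))).filter fun S => S.Nonempty ∧ S.card ≤ t).sigma
      (fun S => ((S ×ˢ S).filter fun q : Fin n × Fin n => q.1 < q.2).powersetCard
        (mfun S.card)) with hI
  set E : ((_ : Finset (Fin n)) × Finset (Fin n × Fin n)) → Set (Fin n → Fin n → Bool) :=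
    fun i => {x | ∀ q ∈ i.2, x q.2 q.1 = true} with hE
  have hW0 := matW_nonneg p n hp0 hp1
  -- Step 0 : Bad ⊆ union of cylinder events
  have hsub : BadSet n t ⊆ {x | ∃ i ∈ I, x ∈ E i} := by
    rintro x ⟨S, hSne, hSt, hSe⟩
    have hcard : mfun S.card ≤
        ((S ×ˢ S).filter fun q : Fin n × Fin n => q.1 < q.2 ∧ (Gr x).Adj q.1 q.2).card := hSe
    obtain ⟨F, hFP, hFcard⟩ := Finset.exists_subset_card_eq hcard
    refine ⟨⟨S, F⟩, ?_, ?_⟩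
    · rw [hI, Finset.mem_sigma]
      constructor
      · rw [Finset.mem_filter]
        exact ⟨Finset.mem_univ S, hSne, hSt⟩
      · rw [Finset.mem_powersetCard]
        refine ⟨?_, hFcard⟩
        intro q hq
        have := hFP hq
        rw [Finset.mem_filter] at this ⊢
        exact ⟨this.1, this.2.1⟩
    · intro q hq
      have := hFP hq
      rw [Finset.mem_filter] at this
      exact (Gr_adj_lt x this.2.1).1 this.2.2
  -- Step 1+2 : union bound and cylinder evaluation
  have hUB : prW (matW p n) (BadSet n t) ≤ ∑ i ∈ I, prW (matW p n) (E i) :=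
    (prW_mono hW0 hsub).trans (prW_biUnion_le hW0 I E)
  have hEval : ∀ i ∈ I, prW (matW p n) (E i) = p ^ (mfun i.1.card) := by
    rintro ⟨S, F⟩ hi
    rw [hI, Finset.mem_sigma] at hi
    have hFcard : F.card = mfun S.card := (Finset.mem_powersetCard.1 hi.2).2
    have hset : E ⟨S, F⟩ = {x : Fin n → Fin n → Bool |
        ∀ q ∈ F.image Prod.swap, x q.1 q.2 = true} := by
      rw [hE]
      ext x
      simp only [Set.mem_setOf_eq, Finset.mem_image]
      constructor
      · rintro h q ⟨q', hq', rfl⟩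
        exact h q' hq'
      · intro h q hq
        exact h q.swap ⟨q, hq, rfl⟩
    rw [hset, prW_cylinder p n (F.image Prod.swap),
      Finset.card_image_of_injective _ Prod.swap_injective, hFcard]
  have hEvalSum : ∑ i ∈ I, prW (matW p n) (E i) = ∑ i ∈ I, p ^ (mfun i.1.card) :=
    Finset.sum_congr rfl hEval
  -- Step 3 : sum over the sigma type
  have hSigma : ∑ i ∈ I, p ^ (mfun i.1.card)
      = ∑ S ∈ ((univ : Finset (Finset (Fin n))).filter fun S => S.Nonempty ∧ S.card ≤ t),
          (((S ×ˢ S).filter fun q : Fin n × Fin n => q.1 < q.2).card.choose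
            (mfun S.card) : ℝ) * p ^ (mfun S.card) := by
    rw [hI, Finset.sum_sigma]
    refine Finset.sum_congr rfl fun S hS => ?_
    have hc : ∀ F ∈ ((S ×ˢ S).filter fun q : Fin n × Fin n => q.1 < q.2).powersetCard
        (mfun S.card), p ^ (mfun ((⟨S, F⟩ : (_ : Finset (Fin n)) × Finset (Fin n × Fin n))).fst.card) = p ^ (mfun S.card) :=
      fun F _ => rfl
    rw [Finset.sum_congr rfl hc, Finset.sum_const, Finset.card_powersetCard, nsmul_eq_mul]
  have hChooseLe : ∀ S : Finset (Fin n),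
      (((S ×ˢ S).filter fun q : Fin n × Fin n => q.1 < q.2).card.choose
        (mfun S.card) : ℝ) * p ^ (mfun S.card)
      ≤ ((S.card * S.card).choose (mfun S.card) : ℝ) * p ^ (mfun S.card) := by
    intro S
    refine mul_le_mul_of_nonneg_right ?_ (pow_nonneg hp0 _)
    have h1 : ((S ×ˢ S).filter fun q : Fin n × Fin n => q.1 < q.2).card ≤ S.card * S.card := by
      calc ((S ×ˢ S).filter fun q : Fin n × Fin n => q.1 < q.2).card
          ≤ (S ×ˢ S).card := Finset.card_le_card (Finset.filter_subset _ _)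
        _ = S.card * S.card := Finset.card_product S S
    exact_mod_cast Nat.choose_le_choose _ h1
  -- Step 4 : group by cardinality
  have hgroup : ((univ : Finset (Finset (Fin n))).filter fun S => S.Nonempty ∧ S.card ≤ t)
      = (Finset.Icc 1 t).biUnion fun s => Finset.powersetCard s univ := by
    ext S
    simp only [Finset.mem_filter, Finset.mem_univ, true_and, Finset.mem_biUnion,
      Finset.mem_Icc, Finset.mem_powersetCard]
    constructor
    · rintro ⟨hne, hle⟩
      exact ⟨S.card, ⟨Finset.card_pos.2 hne, hle⟩, Finset.subset_univ S, rfl⟩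
    · rintro ⟨s, ⟨h1, h2⟩, _, rfl⟩
      exact ⟨Finset.card_pos.1 h1, h2⟩
  have hfinal : ∑ S ∈ ((univ : Finset (Finset (Fin n))).filter
        fun S => S.Nonempty ∧ S.card ≤ t),
        ((S.card * S.card).choose (mfun S.card) : ℝ) * p ^ (mfun S.card)
      = ∑ s ∈ Finset.Icc 1 t,
          (n.choose s : ℝ) * (((s * s).choose (mfun s)) : ℝ) * p ^ (mfun s) := by
    rw [hgroup, Finset.sum_biUnion]
    · refine Finset.sum_congr rfl fun s hs => ?_
      have : ∀ S ∈ Finset.powersetCard s (univ : Finset (Fin n)),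
          ((S.card * S.card).choose (mfun S.card) : ℝ) * p ^ (mfun S.card)
          = (((s * s).choose (mfun s)) : ℝ) * p ^ (mfun s) := by
        intro S hS
        rw [(Finset.mem_powersetCard.1 hS).2]
      rw [Finset.sum_congr rfl this, Finset.sum_const, Finset.card_powersetCard,
        Finset.card_univ, Fintype.card_fin, nsmul_eq_mul]
      ring
    · intro a ha b hb hab
      simp only [Function.onFun, Finset.disjoint_left]
      intro S hSa hSb
      rw [Finset.mem_powersetCard] at hSa hSb
      exact hab (hSa.2 ▸ hSb.2)
  calc prW (matW p n) (BadSet n t) ≤ ∑ i ∈ I, prW (matW p n) (E i) := hUB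
    _ = ∑ i ∈ I, p ^ (mfun i.1.card) := hEvalSum
    _ = _ := hSigma
    _ ≤ ∑ S ∈ ((univ : Finset (Finset (Fin n))).filter fun S => S.Nonempty ∧ S.card ≤ t),
          ((S.card * S.card).choose (mfun S.card) : ℝ) * p ^ (mfun S.card) :=
        Finset.sum_le_sum fun S _ => hChooseLe S
    _ = _ := hfinal

/-- Final bound on the bad event, assuming the numeric side conditions. -/
lemma prW_BadSet_le_sqrt (rho : ℝ) (hp0 : 0 ≤ p) (hp1 : p ≤ 1)
    (hq1 : ee * t * p ≤ 1)
    (hrho : rho = ee ^ 5 * n ^ 2 * t * p ^ 3) (hrho4 : rho ≤ 1 / 4) :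
    prW (matW p n) (BadSet n t) ≤ 2 * Real.sqrt rho := by
  refine (prW_BadSet_le p n t hp0 hp1).trans ?_
  have hterm : ∀ s ∈ Finset.Icc 1 t,
      (n.choose s : ℝ) * (((s * s).choose (mfun s)) : ℝ) * p ^ (mfun s)
        ≤ Real.sqrt rho * (1 / 2) ^ (s - 1) := by
    intro s hs
    rw [Finset.mem_Icc] at hs
    refine term_bound n s t (mfun s) p rho hp0 hs.1 hs.2 ?_ hq1 hrho hrho4
    unfold mfun
    omega
  refine (Finset.sum_le_sum hterm).trans ?_
  have hIcc : Finset.Icc 1 t = Finset.image (· + 1) (Finset.range t) := by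
    ext s
    simp only [Finset.mem_Icc, Finset.mem_image, Finset.mem_range]
    constructor
    · rintro ⟨h1, h2⟩; exact ⟨s - 1, by omega, by omega⟩
    · rintro ⟨i, hi, rfl⟩; omega
  rw [hIcc, Finset.sum_image (by intro a _ b _ h; simp only at h; omega)]
  have : ∀ i ∈ Finset.range t,
      Real.sqrt rho * (1 / 2 : ℝ) ^ (i + 1 - 1) = Real.sqrt rho * (1 / 2) ^ i := by
    intro i _; norm_num
  rw [Finset.sum_congr rfl this, ← Finset.mul_sum]
  have hgeo := sum_geometric_two_le t
  have hs0 := Real.sqrt_nonneg rho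
  calc Real.sqrt rho * ∑ i ∈ Finset.range t, (1 / 2 : ℝ) ^ i
      ≤ Real.sqrt rho * 2 := mul_le_mul_of_nonneg_left hgeo hs0
    _ = 2 * Real.sqrt rho := by ring

end BadEvent

section Key

lemma chrom_toNat_le_iff {n : ℕ} (G : SimpleGraph (Fin n)) (k : ℕ) :
    G.chromaticNumber.toNat ≤ k ↔ G.Colorable k := by
  have hne : G.chromaticNumber ≠ ⊤ := by
    rw [SimpleGraph.chromaticNumber_ne_top_iff_exists]
    exact ⟨Fintype.card (Fin n), G.colorable_of_fintype⟩
  rw [← SimpleGraph.chromaticNumber_le_iff_colorable, ← ENat.coe_toNat hne, Nat.cast_le]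
  simp

/-- Main probabilistic lemma for a single `n`. -/
lemma key_lemma (n : ℕ) (hn : 1 ≤ n) (p δ : ℝ) (t u : ℕ) (beta : ℝ)
    (hp0 : 0 ≤ p) (hp1 : p ≤ 1) (hδ0 : 0 < δ)
    (hu_mem : δ ≤ prW (matW p n) {x | (Gr x).Colorable u})
    (htlam : 2 * Real.sqrt (2 * n / δ) ≤ (t : ℝ))
    (hAc : prW (matW p n) {x | (Gr x).chromaticNumber.toNat < u} ≤ δ)
    (hBad : prW (matW p n) (BadSet n t) ≤ beta) :
    1 - 2 * δ - beta ≤ prW (matW p n)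
      {x | u ≤ (Gr x).chromaticNumber.toNat ∧ (Gr x).chromaticNumber.toNat ≤ u + 3} := by
  classical
  have hW0 := matW_nonneg p n hp0 hp1
  have hW1 := sum_matW p n
  set W := matW p n with hWdef
  set fY : (Fin n → Fin n → Bool) → ℝ := fun x => (remNum (Gr x) u : ℝ) with hfY
  -- Lipschitz property
  have hlip : ∀ (v : Fin n) (x y : Fin n → Fin n → Bool),
      (∀ w, w ≠ v → x w = y w) → |fY x - fY y| ≤ 1 := by
    intro v x y hxy
    have h1 := remNum_lipschitz u v x y hxy
    have h2 := remNum_lipschitz u v y x (fun w hw => (hxy w hw).symm)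
    rw [abs_le]
    constructor
    · have : (remNum (Gr y) u : ℝ) ≤ (remNum (Gr x) u : ℝ) + 1 := by exact_mod_cast h2
      simp only [hfY]; linarith
    · have : (remNum (Gr x) u : ℝ) ≤ (remNum (Gr y) u : ℝ) + 1 := by exact_mod_cast h1
      simp only [hfY]; linarith
  -- Variance bound
  have hvar : varW W fY ≤ n := by
    have := var_le_of_lipschitz (rowW p n) (rowW_nonneg p n hp0 hp1) (sum_rowW p n)
      (k := n) fY hlip
    exact this
  set m0 : ℝ := exW W fY with hm0
  set lam : ℝ := Real.sqrt (2 * n / δ) with hlam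
  have hn0 : (0:ℝ) < n := by exact_mod_cast hn
  have hlam0 : 0 < lam := by
    rw [hlam]
    apply Real.sqrt_pos.2
    positivity
  have hlamsq : lam ^ 2 = 2 * n / δ := by
    rw [hlam, Real.sq_sqrt (by positivity)]
  have hcheb : prW W {x | lam ≤ |fY x - m0|} ≤ δ / 2 := by
    have h := chebyshev hW0 (f := fY) hlam0 m0
    have h2 : lam ^ 2 * prW W {x | lam ≤ |fY x - m0|} ≤ n := le_trans h hvar
    rw [hlamsq] at h2
    have hd : (0:ℝ) < 2 * n / δ := by positivity
    calc prW W {x | lam ≤ |fY x - m0|} = (2 * n / δ * prW W {x | lam ≤ |fY x - m0|}) / (2 * n / δ) := by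
          field_simp
      _ ≤ n / (2 * n / δ) := by
          exact div_le_div_of_nonneg_right h2 hd.le
      _ = δ / 2 := by field_simp
  -- The mean is at most lam
  have hmean : m0 ≤ lam := by
    by_contra hcon
    push_neg at hcon
    have hzero : {x : Fin n → Fin n → Bool | (Gr x).Colorable u}
        ⊆ {x | lam ≤ |fY x - m0|} := by
      intro x hx
      have h0 : remNum (Gr x) u = 0 := (remNum_eq_zero_iff _ _).2 hx
      have : fY x = 0 := by rw [hfY]; simp [h0]
      rw [Set.mem_setOf_eq, this]
      rw [abs_sub_comm, abs_of_nonneg (by linarith [hlam0] : (0:ℝ) ≤ m0 - 0)]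
      linarith
    have := (prW_mono hW0 hzero).trans hcheb
    linarith [hu_mem.trans this]
  -- Pr(Y ≥ t) small
  have hYt : prW W {x | (t : ℝ) ≤ fY x} ≤ δ / 2 := by
    refine (prW_mono hW0 ?_).trans hcheb
    intro x hx
    rw [Set.mem_setOf_eq] at hx ⊢
    have hY0 : 0 ≤ fY x := by rw [hfY]; positivity
    rw [abs_of_nonneg (by linarith : (0:ℝ) ≤ fY x - m0)]
    linarith
  -- Events
  set A : Set (Fin n → Fin n → Bool) := {x | u ≤ (Gr x).chromaticNumber.toNat} with hA
  set B : Set (Fin n → Fin n → Bool) := {x | fY x < (t:ℝ)} with hB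
  set C : Set (Fin n → Fin n → Bool) := (BadSet n t)ᶜ with hC
  have hAcompl : prW W Aᶜ ≤ δ := by
    have : Aᶜ = {x | (Gr x).chromaticNumber.toNat < u} := by
      rw [hA]; ext x; simp [not_le]
    rw [this]; exact hAc
  have hBcompl : prW W Bᶜ ≤ δ / 2 := by
    have : Bᶜ = {x | (t : ℝ) ≤ fY x} := by
      rw [hB]; ext x; simp [not_lt]
    rw [this]; exact hYt
  have hCcompl : prW W Cᶜ ≤ beta := by
    rw [hC, compl_compl]; exact hBad
  have hincl : A ∩ B ∩ C ⊆
      {x | u ≤ (Gr x).chromaticNumber.toNat ∧ (Gr x).chromaticNumber.toNat ≤ u + 3} := by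
    rintro x ⟨⟨hxA, hxB⟩, hxC⟩
    refine ⟨hxA, ?_⟩
    rw [chrom_toNat_le_iff]
    obtain ⟨S, hScard, hSprop⟩ := remNum_spec (Gr x) u
    have hSt : S.card ≤ t := by
      have h1 : fY x < (t:ℝ) := hxB
      have h2 : (remNum (Gr x) u : ℝ) < (t : ℝ) := h1
      have h3 : remNum (Gr x) u < t := by exact_mod_cast h2
      omega
    refine colorable_add_three (Gr x) S u hSprop ?_
    refine propOn_three_of_sparse (Gr x) S ?_
    intro T hTS hTne
    have hTcard : T.card ≤ t := le_trans (Finset.card_le_card hTS) hSt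
    have hnotbad : ¬ (mfun T.card ≤ eT (Gr x) T) := by
      intro hcon
      exact hxC ⟨T, hTne, hTcard, hcon⟩
    push_neg at hnotbad
    refine exists_low_degree (Gr x) T hTne ?_
    unfold mfun at hnotbad
    omega
  calc 1 - 2 * δ - beta ≤ 1 - prW W Aᶜ - prW W Bᶜ - prW W Cᶜ := by linarith
    _ ≤ prW W (A ∩ B ∩ C) := prW_inter3_ge hW0 hW1 A B C
    _ ≤ _ := prW_mono hW0 hincl

end Key

section Bridge

open scoped Classical

variable (p : ℝ) (n : ℕ)

noncomputable def symW (p : ℝ) {n : ℕ} (ω : Sym2 (Fin n) → Bool) : ℝ := ∏ e, wt p (ω e)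

lemma symW_nonneg (hp0 : 0 ≤ p) (hp1 : p ≤ 1) {n : ℕ} (ω : Sym2 (Fin n) → Bool) :
    0 ≤ symW p ω :=
  Finset.prod_nonneg fun e _ => wt_nonneg p hp0 hp1 (ω e)

instance bernoulliMeasure_finite (p : ℝ) : IsFiniteMeasure (bernoulliMeasure p) := by
  constructor
  unfold bernoulliMeasure
  rw [Measure.add_apply, Measure.smul_apply, Measure.smul_apply]
  simp only [smul_eq_mul]
  exact ENNReal.add_lt_top.2 ⟨ENNReal.mul_lt_top ENNReal.ofReal_lt_top
    (measure_lt_top _ _), ENNReal.mul_lt_top ENNReal.ofReal_lt_top (measure_lt_top _ _)⟩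

lemma mk_sup_inf {n : ℕ} (a b : Fin n) : s(a ⊔ b, a ⊓ b) = s(a, b) := by
  rcases le_total a b with h | h
  · rw [sup_eq_right.2 h, inf_eq_left.2 h, Sym2.eq_swap]
  · rw [sup_eq_left.2 h, inf_eq_right.2 h]

noncomputable def sup2 {n : ℕ} (e : Sym2 (Fin n)) : Fin n :=
  Sym2.lift ⟨fun a b => a ⊔ b, fun a b => by simp only []; rw [sup_comm]⟩ e

noncomputable def inf2 {n : ℕ} (e : Sym2 (Fin n)) : Fin n :=
  Sym2.lift ⟨fun a b => a ⊓ b, fun a b => by simp only []; rw [inf_comm]⟩ e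

lemma Phi_eq {n : ℕ} (x : Fin n → Fin n → Bool) (e : Sym2 (Fin n)) :
    Phi x e = x (sup2 e) (inf2 e) := by
  induction e using Sym2.ind with
  | _ a b => rfl

lemma mk_sup2_inf2 {n : ℕ} (e : Sym2 (Fin n)) : s(sup2 e, inf2 e) = e := by
  induction e using Sym2.ind with
  | _ a b => exact mk_sup_inf a b

/-- The matrix space splits as (lower triangle = `Sym2`) × (strict upper triangle). -/
noncomputable def matEquiv (n : ℕ) : (Fin n → Fin n → Bool) ≃
    ((Sym2 (Fin n) → Bool) × ({q : Fin n × Fin n // ¬ q.2 ≤ q.1} → Bool)) where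
  toFun x := (Phi x, fun q => x q.1.1 q.1.2)
  invFun yz := fun v w => if h : w ≤ v then yz.1 s(v, w) else yz.2 ⟨(v, w), h⟩
  left_inv x := by
    funext v w
    by_cases h : w ≤ v
    · simp only [dif_pos h]
      have h2 : Phi x s(v, w) = x (v ⊔ w) (v ⊓ w) := Phi_mk x v w
      rw [h2, sup_eq_left.2 h, inf_eq_right.2 h]
    · simp only [dif_neg h]
  right_inv yz := by
    rcases yz with ⟨ω, z⟩
    dsimp only
    refine Prod.ext ?_ ?_
    · funext e
      induction e using Sym2.ind with
      | _ a b =>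
        dsimp only
        rw [Phi_mk]
        have h : a ⊓ b ≤ a ⊔ b := inf_le_sup
        simp only [dif_pos h]
        rw [mk_sup_inf]
    · funext q
      rcases q with ⟨⟨v, w⟩, h⟩
      show (if h' : w ≤ v then ω s(v, w) else z ⟨(v, w), h'⟩) = z ⟨(v, w), h⟩
      simp only [dif_neg h]

noncomputable def eSym (n : ℕ) : Sym2 (Fin n) ≃ {q : Fin n × Fin n // q.2 ≤ q.1} where
  toFun e := ⟨(sup2 e, inf2 e), by
    induction e using Sym2.ind with
    | _ a b => exact inf_le_sup⟩
  invFun q := s(q.1.1, q.1.2)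
  left_inv e := mk_sup2_inf2 e
  right_inv q := by
    rcases q with ⟨⟨a, b⟩, h⟩
    apply Subtype.ext
    have h1 : sup2 s(a, b) = a := by
      show a ⊔ b = a
      exact sup_eq_left.2 h
    have h2 : inf2 s(a, b) = b := by
      show a ⊓ b = b
      exact inf_eq_right.2 h
    simp only [h1, h2]

lemma matW_split (x : Fin n → Fin n → Bool) :
    matW p n x = symW p (Phi x)
      * ∏ q : {q : Fin n × Fin n // ¬ q.2 ≤ q.1}, wt p (x q.1.1 q.1.2) := by
  have h0 : matW p n x = ∏ q : Fin n × Fin n, wt p (x q.1 q.2) := by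
    unfold matW pw rowW
    rw [Fintype.prod_prod_type (f := fun q : Fin n × Fin n => wt p (x q.1 q.2))]
  rw [h0, ← Fintype.prod_subtype_mul_prod_subtype (fun q : Fin n × Fin n => q.2 ≤ q.1)
    (fun q => wt p (x q.1 q.2))]
  congr 1
  have := Equiv.prod_comp (eSym n)
    (fun q : {q : Fin n × Fin n // q.2 ≤ q.1} => wt p (x q.1.1 q.1.2))
  rw [← this]
  unfold symW
  refine Finset.prod_congr rfl fun e _ => ?_
  rw [Phi_eq]
  rfl

lemma sum_upperW : ∑ z : {q : Fin n × Fin n // ¬ q.2 ≤ q.1} → Bool,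
    ∏ q, wt p (z q) = 1 := by
  rw [sum_prod_bool (fun _ b => wt p b)]
  simp [wt]

/-- Change of variables: probability of a `Phi`-pullback event. -/
lemma prW_phi (A : Set (Sym2 (Fin n) → Bool)) :
    prW (matW p n) (Phi ⁻¹' A)
      = ∑ ω : Sym2 (Fin n) → Bool, Set.indicator A (symW p) ω := by
  unfold prW
  rw [← Equiv.sum_comp (matEquiv n).symm
    (fun x => Set.indicator (Phi ⁻¹' A) (matW p n) x)]
  rw [Fintype.sum_prod_type]
  have hfst : ∀ yz : (Sym2 (Fin n) → Bool) × ({q : Fin n × Fin n // ¬ q.2 ≤ q.1} → Bool),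
      Phi ((matEquiv n).symm yz) = yz.1 := by
    intro yz
    have := (matEquiv n).apply_symm_apply yz
    exact congrArg Prod.fst this
  have hsnd : ∀ yz : (Sym2 (Fin n) → Bool) × ({q : Fin n × Fin n // ¬ q.2 ≤ q.1} → Bool),
      (fun q : {q : Fin n × Fin n // ¬ q.2 ≤ q.1} =>
        ((matEquiv n).symm yz) q.1.1 q.1.2) = yz.2 := by
    intro yz
    have := (matEquiv n).apply_symm_apply yz
    exact congrArg Prod.snd this
  have hsummand : ∀ (ω : Sym2 (Fin n) → Bool)
      (z : {q : Fin n × Fin n // ¬ q.2 ≤ q.1} → Bool),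
      Set.indicator (Phi ⁻¹' A) (matW p n) ((matEquiv n).symm (ω, z))
      = Set.indicator A (symW p) ω * ∏ q, wt p (z q) := by
    intro ω z
    by_cases hω : ω ∈ A
    · rw [Set.indicator_of_mem (by rw [Set.mem_preimage, hfst (ω, z)]; exact hω),
        Set.indicator_of_mem hω]
      rw [matW_split, hfst (ω, z)]
      congr 1
      exact Finset.prod_congr rfl fun q _ => by rw [congrFun (hsnd (ω, z)) q]
    · rw [Set.indicator_of_notMem (by rw [Set.mem_preimage, hfst (ω, z)]; exact hω),
        Set.indicator_of_notMem hω]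
      ring
  calc ∑ ω : Sym2 (Fin n) → Bool, ∑ z : {q : Fin n × Fin n // ¬ q.2 ≤ q.1} → Bool,
        Set.indicator (Phi ⁻¹' A) (matW p n) ((matEquiv n).symm (ω, z))
      = ∑ ω : Sym2 (Fin n) → Bool, ∑ z : {q : Fin n × Fin n // ¬ q.2 ≤ q.1} → Bool,
        Set.indicator A (symW p) ω * ∏ q, wt p (z q) := by
        refine Finset.sum_congr rfl fun ω _ => Finset.sum_congr rfl fun z _ => hsummand ω z
    _ = ∑ ω : Sym2 (Fin n) → Bool, Set.indicator A (symW p) ω := by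
        refine Finset.sum_congr rfl fun ω _ => ?_
        rw [← Finset.mul_sum, sum_upperW p n, mul_one]

/-- The `G(n,p)` measure of any event is the explicit finite sum. -/
lemma gnp_eq_sum (hp0 : 0 ≤ p) (hp1 : p ≤ 1) (A : Set (Sym2 (Fin n) → Bool)) :
    gnp n p A = ENNReal.ofReal (∑ ω : Sym2 (Fin n) → Bool, Set.indicator A (symW p) ω) := by
  have hsingle : ∀ ω : Sym2 (Fin n) → Bool, gnp n p {ω} = ENNReal.ofReal (symW p ω) := by
    intro ω
    rw [← Set.univ_pi_singleton ω]
    unfold gnp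
    rw [Measure.pi_pi]
    have hb : ∀ b : Bool, bernoulliMeasure p {b} = ENNReal.ofReal (wt p b) := by
      intro b
      unfold bernoulliMeasure
      rw [Measure.add_apply, Measure.smul_apply, Measure.smul_apply,
        Measure.dirac_apply, Measure.dirac_apply]
      cases b <;> simp [wt, Set.indicator]
    calc ∏ e, bernoulliMeasure p {ω e} = ∏ e, ENNReal.ofReal (wt p (ω e)) :=
          Finset.prod_congr rfl fun e _ => hb (ω e)
      _ = ENNReal.ofReal (∏ e, wt p (ω e)) :=
          (ENNReal.ofReal_prod_of_nonneg fun e _ => wt_nonneg p hp0 hp1 (ω e)).symm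
      _ = ENNReal.ofReal (symW p ω) := rfl
  have hms : ∀ ω : Sym2 (Fin n) → Bool, MeasurableSet ({ω} : Set (Sym2 (Fin n) → Bool)) :=
    fun ω => measurableSet_singleton ω
  have hAfin := A.toFinite
  have hAeq : A = ⋃ ω ∈ hAfin.toFinset, ({ω} : Set (Sym2 (Fin n) → Bool)) := by
    ext ω
    simp only [Set.mem_iUnion, Set.mem_singleton_iff, Set.Finite.mem_toFinset, exists_prop]
    constructor
    · intro h; exact ⟨ω, h, rfl⟩
    · rintro ⟨a, ha, rfl⟩; exact ha
  have hdisj : (hAfin.toFinset : Set (Sym2 (Fin n) → Bool)).Pairwise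
      (Function.onFun Disjoint fun ω => ({ω} : Set (Sym2 (Fin n) → Bool))) := by
    intro a _ b hb hab
    simp only [Function.onFun]
    exact Set.disjoint_singleton.2 hab
  have hmu : gnp n p A = ∑ ω ∈ hAfin.toFinset, ENNReal.ofReal (symW p ω) := by
    conv_lhs => rw [hAeq]
    rw [measure_biUnion_finset hdisj (fun ω _ => hms ω)]
    exact Finset.sum_congr rfl fun ω _ => hsingle ω
  have hsum : (∑ ω : Sym2 (Fin n) → Bool, Set.indicator A (symW p) ω)
      = ∑ ω ∈ hAfin.toFinset, symW p ω := by
    classical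
    rw [← Finset.sum_filter_add_sum_filter_not Finset.univ (fun ω => ω ∈ A)
      (Set.indicator A (symW p))]
    have h1 : ∑ ω ∈ Finset.univ.filter (fun ω => ω ∈ A), Set.indicator A (symW p) ω
        = ∑ ω ∈ Finset.univ.filter (fun ω => ω ∈ A), symW p ω := by
      refine Finset.sum_congr rfl fun ω hω => ?_
      rw [Set.indicator_of_mem (Finset.mem_filter.1 hω).2]
    have h2 : ∑ ω ∈ Finset.univ.filter (fun ω => ω ∉ A), Set.indicator A (symW p) ω = 0 := by
      refine Finset.sum_eq_zero fun ω hω => ?_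
      rw [Set.indicator_of_notMem (Finset.mem_filter.1 hω).2]
    rw [h1, h2, add_zero]
    refine Finset.sum_congr ?_ fun _ _ => rfl
    ext ω
    simp only [Finset.mem_filter, Finset.mem_univ, true_and, Set.Finite.mem_toFinset]
  rw [hmu, hsum, ENNReal.ofReal_sum_of_nonneg (fun ω _ => symW_nonneg p hp0 hp1 ω)]

lemma gnp_eq_prW (hp0 : 0 ≤ p) (hp1 : p ≤ 1) (A : Set (Sym2 (Fin n) → Bool)) :
    gnp n p A = ENNReal.ofReal (prW (matW p n) (Phi ⁻¹' A)) := by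
  rw [gnp_eq_sum p n hp0 hp1 A, prW_phi]

end Bridge

section Final

open Filter

lemma prW_univ {Ω : Type*} [Fintype Ω] {W : Ω → ℝ} (hW1 : ∑ x, W x = 1) :
    prW W (Set.univ) = 1 := by
  unfold prW
  rw [← hW1]
  exact Finset.sum_congr rfl fun x _ => by rw [Set.indicator_univ]

lemma prW_empty {Ω : Type*} [Fintype Ω] {W : Ω → ℝ} : prW W (∅ : Set Ω) = 0 := by
  unfold prW
  simp [Set.indicator_empty]

/-- Generic decay lemma: `C * n^a * √(log n) * n^(-b) → 0` whenever `a < b`. -/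
lemma tendsto_aux (C a b : ℝ) (hab : a < b) :
    Tendsto (fun n : ℕ => C * ((n:ℝ) ^ a * (Real.sqrt (Real.log n) * (n:ℝ) ^ (-b))))
      atTop (nhds 0) := by
  set eps := b - a with heps
  have heps0 : 0 < eps := by rw [heps]; linarith
  have hlog : ∀ᶠ x : ℝ in atTop, Real.log x ≤ x ^ eps := by
    have h := isLittleO_log_rpow_atTop heps0
    have h2 := h.def (by norm_num : (0:ℝ) < 1)
    filter_upwards [h2, eventually_ge_atTop (1:ℝ)] with x hx hx1
    rw [one_mul] at hx
    calc Real.log x ≤ |Real.log x| := le_abs_self _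
      _ ≤ |x ^ eps| := by simpa [Real.norm_eq_abs] using hx
      _ = x ^ eps := abs_of_nonneg (Real.rpow_nonneg (by linarith) _)
  have hlogn : ∀ᶠ n : ℕ in atTop, Real.log n ≤ (n:ℝ) ^ eps :=
    tendsto_natCast_atTop_atTop.eventually hlog
  have hbound : ∀ᶠ n : ℕ in atTop,
      ‖C * ((n:ℝ) ^ a * (Real.sqrt (Real.log n) * (n:ℝ) ^ (-b)))‖
        ≤ |C| * (n:ℝ) ^ (-(eps/2)) := by
    filter_upwards [hlogn, eventually_ge_atTop 1] with n hlogle hn1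
    have hn0 : (0:ℝ) < n := by exact_mod_cast hn1
    have hsqrt : Real.sqrt (Real.log n) ≤ (n:ℝ) ^ (eps / 2) := by
      calc Real.sqrt (Real.log n) ≤ Real.sqrt ((n:ℝ) ^ eps) := Real.sqrt_le_sqrt hlogle
        _ = (n:ℝ) ^ (eps / 2) := by
            rw [Real.sqrt_eq_rpow, ← Real.rpow_mul hn0.le]
            ring_nf
    have hterm : (n:ℝ) ^ a * (Real.sqrt (Real.log n) * (n:ℝ) ^ (-b))
        ≤ (n:ℝ) ^ (-(eps/2)) := by
      have h1 : (n:ℝ) ^ a * (Real.sqrt (Real.log n) * (n:ℝ) ^ (-b))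
          ≤ (n:ℝ) ^ a * ((n:ℝ) ^ (eps/2) * (n:ℝ) ^ (-b)) := by
        refine mul_le_mul_of_nonneg_left ?_ (Real.rpow_nonneg hn0.le _)
        exact mul_le_mul_of_nonneg_right hsqrt (Real.rpow_nonneg hn0.le _)
      have h2 : (n:ℝ) ^ a * ((n:ℝ) ^ (eps/2) * (n:ℝ) ^ (-b)) = (n:ℝ) ^ (-(eps/2)) := by
        rw [← Real.rpow_add hn0, ← Real.rpow_add hn0]
        congr 1
        rw [heps]; ring
      linarith
    have hpos : 0 ≤ (n:ℝ) ^ a * (Real.sqrt (Real.log n) * (n:ℝ) ^ (-b)) := by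
      have := Real.sqrt_nonneg (Real.log n)
      have := Real.rpow_nonneg hn0.le a
      have := Real.rpow_nonneg hn0.le (-b)
      positivity
    rw [norm_mul, Real.norm_eq_abs, Real.norm_eq_abs, abs_of_nonneg hpos]
    exact mul_le_mul_of_nonneg_left hterm (abs_nonneg C)
  have hlim : Tendsto (fun n : ℕ => |C| * (n:ℝ) ^ (-(eps/2))) atTop (nhds 0) := by
    have h1 : Tendsto (fun x : ℝ => x ^ (-(eps/2))) atTop (nhds 0) :=
      tendsto_rpow_neg_atTop (by linarith)
    have h2 : Tendsto (fun n : ℕ => ((n:ℝ)) ^ (-(eps/2))) atTop (nhds 0) :=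
      h1.comp tendsto_natCast_atTop_atTop
    have := h2.const_mul |C|
    simpa using this
  exact squeeze_zero_norm' hbound hlim

variable (α : ℝ)

noncomputable def pseq (n : ℕ) : ℝ := (n:ℝ) ^ (-α)

noncomputable def tseq (n : ℕ) : ℕ := ⌈Real.sqrt (8 * n * Real.log n)⌉₊

noncomputable def rhoseq (n : ℕ) : ℝ := ee ^ 5 * n ^ 2 * tseq n * (pseq α n) ^ 3

noncomputable def useq (n : ℕ) : ℕ :=
  sInf {k | (Real.log n)⁻¹ ≤ prW (matW (pseq α n) n) {x | (Gr x).Colorable k}}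

lemma pseq_nonneg (n : ℕ) : 0 ≤ pseq α n := Real.rpow_nonneg (Nat.cast_nonneg n) _

lemma pseq_le_one (hα : 0 < α) (n : ℕ) : pseq α n ≤ 1 := by
  unfold pseq
  rcases Nat.eq_zero_or_pos n with rfl | hn
  · rw [Nat.cast_zero, Real.zero_rpow (by linarith)]
    norm_num
  · exact Real.rpow_le_one_of_one_le_of_nonpos (by exact_mod_cast hn) (by linarith)

lemma tseq_bound : ∀ᶠ n : ℕ in atTop,
    (tseq n : ℝ) ≤ 2 * (Real.sqrt 8 * (Real.sqrt n * Real.sqrt (Real.log n))) := by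
  filter_upwards [eventually_ge_atTop 3] with n hn3
  have hn0 : (0:ℝ) < n := by
    have : 0 < n := by omega
    exact_mod_cast this
  have hlog1 : 1 ≤ Real.log n := by
    rw [Real.le_log_iff_exp_le hn0]
    have h1 := Real.exp_one_lt_d9
    have h2 : (3:ℝ) ≤ n := by exact_mod_cast hn3
    linarith
  have harg : (1:ℝ) ≤ 8 * n * Real.log n := by
    have h2 : (3:ℝ) ≤ n := by exact_mod_cast hn3
    nlinarith
  have hy1 : 1 ≤ Real.sqrt (8 * n * Real.log n) := by
    rw [show (1:ℝ) = Real.sqrt 1 from (Real.sqrt_one).symm]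
    exact Real.sqrt_le_sqrt harg
  have hceil : (tseq n : ℝ) ≤ Real.sqrt (8 * n * Real.log n) + 1 :=
    (Nat.ceil_lt_add_one (Real.sqrt_nonneg _)).le
  have hsplit : Real.sqrt (8 * n * Real.log n)
      = Real.sqrt 8 * (Real.sqrt n * Real.sqrt (Real.log n)) := by
    rw [mul_assoc, Real.sqrt_mul (by norm_num : (0:ℝ) ≤ 8),
      Real.sqrt_mul hn0.le]
  rw [hsplit] at hceil hy1
  linarith

lemma log_one_le : ∀ᶠ n : ℕ in atTop, 1 ≤ Real.log n := by
  filter_upwards [eventually_ge_atTop 3] with n hn3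
  have hn0 : (0:ℝ) < n := by
    have : 0 < n := by omega
    exact_mod_cast this
  rw [Real.le_log_iff_exp_le hn0]
  have h1 := Real.exp_one_lt_d9
  have h2 : (3:ℝ) ≤ n := by exact_mod_cast hn3
  linarith

lemma p_pow_eq (a : ℝ) (k : ℕ) : ∀ᶠ n : ℕ in atTop,
    ((n:ℝ) ^ (-a)) ^ k = (n:ℝ) ^ (-(k * a)) := by
  filter_upwards [eventually_ge_atTop 1] with n hn1
  have hn0 : (0:ℝ) ≤ n := by positivity
  rw [← Real.rpow_natCast ((n:ℝ) ^ (-a)) k, ← Real.rpow_mul hn0]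
  congr 1
  ring

lemma rhoseq_tendsto (hα : 5 / 6 < α) : Tendsto (rhoseq α) atTop (nhds 0) := by
  have haux := tendsto_aux (2 * Real.sqrt 8 * ee ^ 5) (5/2) (3 * α) (by linarith)
  refine squeeze_zero' ?_ ?_ haux
  · filter_upwards [eventually_ge_atTop 1] with n hn
    unfold rhoseq
    have h1 : 0 ≤ pseq α n := pseq_nonneg α n
    have h2 : (0:ℝ) ≤ tseq n := Nat.cast_nonneg _
    positivity
  · filter_upwards [tseq_bound, p_pow_eq α 3, eventually_ge_atTop 1] with n htb hpp hn1
    have hn0 : (0:ℝ) < n := by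
      have : 0 < n := by omega
      exact_mod_cast this
    unfold rhoseq pseq
    rw [hpp]
    have hsq : ((n:ℝ)) ^ (2:ℕ) * Real.sqrt n = (n:ℝ) ^ ((5:ℝ)/2) := by
      rw [Real.sqrt_eq_rpow, ← Real.rpow_natCast (n:ℝ) 2, ← Real.rpow_add hn0]
      norm_num
    have hp3 : (0:ℝ) ≤ (n:ℝ) ^ (-(3 * α)) := Real.rpow_nonneg hn0.le _
    calc ee ^ 5 * (n:ℝ) ^ 2 * (tseq n) * (n:ℝ) ^ (-(3*α))
        ≤ ee ^ 5 * (n:ℝ) ^ 2 * (2 * (Real.sqrt 8 * (Real.sqrt n * Real.sqrt (Real.log n))))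
            * (n:ℝ) ^ (-(3*α)) := by
          refine mul_le_mul_of_nonneg_right (mul_le_mul_of_nonneg_left htb (by positivity)) hp3
      _ = (2 * Real.sqrt 8 * ee ^ 5) * (((n:ℝ)) ^ (2:ℕ) * Real.sqrt n
            * (Real.sqrt (Real.log n) * (n:ℝ) ^ (-(3*α)))) := by ring
      _ = (2 * Real.sqrt 8 * ee ^ 5) * ((n:ℝ) ^ ((5:ℝ)/2)
            * (Real.sqrt (Real.log n) * (n:ℝ) ^ (-(3*α)))) := by rw [hsq]
      _ = _ := by norm_num

lemma etp_tendsto (hα : 5 / 6 < α) :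
    Tendsto (fun n : ℕ => ee * tseq n * pseq α n) atTop (nhds 0) := by
  have haux := tendsto_aux (2 * Real.sqrt 8 * ee) (1/2) α (by linarith)
  refine squeeze_zero' ?_ ?_ haux
  · filter_upwards [eventually_ge_atTop 1] with n hn
    have h1 : 0 ≤ pseq α n := pseq_nonneg α n
    have h2 : (0:ℝ) ≤ tseq n := Nat.cast_nonneg _
    positivity
  · filter_upwards [tseq_bound, eventually_ge_atTop 1] with n htb hn1
    have hn0 : (0:ℝ) < n := by
      have : 0 < n := by omega
      exact_mod_cast this
    unfold pseq
    have hsq : Real.sqrt n = (n:ℝ) ^ ((1:ℝ)/2) := by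
      rw [Real.sqrt_eq_rpow]
    have hp : (0:ℝ) ≤ (n:ℝ) ^ (-α) := Real.rpow_nonneg hn0.le _
    calc ee * (tseq n) * (n:ℝ) ^ (-α)
        ≤ ee * (2 * (Real.sqrt 8 * (Real.sqrt n * Real.sqrt (Real.log n)))) * (n:ℝ) ^ (-α) := by
          refine mul_le_mul_of_nonneg_right (mul_le_mul_of_nonneg_left htb ee_pos.le) hp
      _ = (2 * Real.sqrt 8 * ee) * (Real.sqrt n * (Real.sqrt (Real.log n) * (n:ℝ) ^ (-α))) := by
          ring
      _ = (2 * Real.sqrt 8 * ee) * ((n:ℝ) ^ ((1:ℝ)/2) * (Real.sqrt (Real.log n) * (n:ℝ) ^ (-α))) := by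
          rw [hsq]
      _ = _ := by norm_num

lemma dseq_tendsto : Tendsto (fun n : ℕ => (Real.log n)⁻¹) atTop (nhds 0) :=
  (Real.tendsto_log_atTop.comp tendsto_natCast_atTop_atTop).inv_tendsto_atTop

lemma sqrt_rho_tendsto (hα : 5 / 6 < α) :
    Tendsto (fun n : ℕ => 2 * Real.sqrt (rhoseq α n)) atTop (nhds 0) := by
  have h1 : Tendsto (fun n : ℕ => Real.sqrt (rhoseq α n)) atTop (nhds 0) := by
    have := (Real.continuous_sqrt.tendsto' 0 0 Real.sqrt_zero).comp (rhoseq_tendsto α hα)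
    exact this
  have := h1.const_mul 2
  simpa using this

/-- The concentration theorem on the matrix side. -/
theorem main_tendsto (hα : 5 / 6 < α) :
    Tendsto (fun n : ℕ => prW (matW (pseq α n) n)
      {x | useq α n ≤ (Gr x).chromaticNumber.toNat ∧
        (Gr x).chromaticNumber.toNat ≤ useq α n + 3}) atTop (nhds 1) := by
  have hα0 : 0 < α := by linarith
  set q : ℕ → ℝ := fun n => prW (matW (pseq α n) n)
      {x | useq α n ≤ (Gr x).chromaticNumber.toNat ∧
        (Gr x).chromaticNumber.toNat ≤ useq α n + 3} with hq
  -- lower bound sequence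
  set lo : ℕ → ℝ := fun n => 1 - 2 * (Real.log n)⁻¹ - 2 * Real.sqrt (rhoseq α n) with hlo
  have hlo_tendsto : Tendsto lo atTop (nhds 1) := by
    have h1 := dseq_tendsto.const_mul 2
    have h2 := sqrt_rho_tendsto α hα
    have h3 := (tendsto_const_nhds (x := (1:ℝ)) (f := atTop)).sub h1
    have h4 := h3.sub h2
    simpa using h4
  have hup : ∀ n, q n ≤ 1 := fun n =>
    prW_le_one (matW_nonneg _ _ (pseq_nonneg α n) (pseq_le_one α hα0 n)) (sum_matW _ _) _
  -- eventual conditions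
  have hrho4 : ∀ᶠ n : ℕ in atTop, rhoseq α n ≤ 1/4 :=
    (rhoseq_tendsto α hα).eventually_le_const (by norm_num)
  have hq1 : ∀ᶠ n : ℕ in atTop, ee * tseq n * pseq α n ≤ 1 :=
    (etp_tendsto α hα).eventually_le_const (by norm_num)
  have hlower : ∀ᶠ n : ℕ in atTop, lo n ≤ q n := by
    filter_upwards [eventually_ge_atTop 3, log_one_le, hrho4, hq1] with n hn3 hlog1 h4 h1
    have hn1 : 1 ≤ n := by omega
    have hp0 := pseq_nonneg α n
    have hp1 := pseq_le_one α hα0 n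
    have hlogpos : (0:ℝ) < Real.log n := by linarith
    have hδ0 : (0:ℝ) < (Real.log n)⁻¹ := by positivity
    have hδ1 : (Real.log n)⁻¹ ≤ 1 := by
      rw [inv_le_one_iff₀]
      right; linarith
    -- the defining set of useq is nonempty
    have huniv : {x : Fin n → Fin n → Bool | (Gr x).Colorable n} = Set.univ := by
      ext x
      simp only [Set.mem_setOf_eq, Set.mem_univ, iff_true]
      have := (Gr x).colorable_of_fintype
      rwa [Fintype.card_fin] at this
    have hne : {k | (Real.log n)⁻¹ ≤ prW (matW (pseq α n) n)
        {x | (Gr x).Colorable k}}.Nonempty := by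
      refine ⟨n, ?_⟩
      rw [Set.mem_setOf_eq, huniv, prW_univ (sum_matW _ _)]
      exact hδ1
    have hu_mem : (Real.log n)⁻¹ ≤ prW (matW (pseq α n) n)
        {x | (Gr x).Colorable (useq α n)} := Nat.sInf_mem hne
    have hAc : prW (matW (pseq α n) n)
        {x | (Gr x).chromaticNumber.toNat < useq α n} ≤ (Real.log n)⁻¹ := by
      rcases Nat.eq_zero_or_pos (useq α n) with h0 | hpos
      · rw [h0]
        have : {x : Fin n → Fin n → Bool | (Gr x).chromaticNumber.toNat < 0} = ∅ := by
          ext x; simp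
        rw [this, prW_empty]
        exact hδ0.le
      · have hk : useq α n - 1 ∉ {k | (Real.log n)⁻¹ ≤ prW (matW (pseq α n) n)
            {x | (Gr x).Colorable k}} := by
          intro hmem
          have h2 : useq α n ≤ useq α n - 1 := Nat.sInf_le hmem
          omega
        rw [Set.mem_setOf_eq, not_le] at hk
        have hev : {x : Fin n → Fin n → Bool | (Gr x).chromaticNumber.toNat < useq α n}
            = {x | (Gr x).Colorable (useq α n - 1)} := by
          ext x
          rw [Set.mem_setOf_eq, Set.mem_setOf_eq, ← chrom_toNat_le_iff]
          omega
        rw [hev]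
        exact hk.le
    have htlam : 2 * Real.sqrt (2 * n / (Real.log n)⁻¹) ≤ (tseq n : ℝ) := by
      have harg : 2 * (n:ℝ) / (Real.log n)⁻¹ = 2 * n * Real.log n := by
        field_simp
      rw [harg]
      have h2 : 2 * Real.sqrt (2 * n * Real.log n) = Real.sqrt (8 * n * Real.log n) := by
        rw [show (8:ℝ) * n * Real.log n = 4 * (2 * n * Real.log n) by ring,
          Real.sqrt_mul (by norm_num : (0:ℝ) ≤ 4),
          show Real.sqrt 4 = 2 by
            rw [show (4:ℝ) = 2^2 by norm_num, Real.sqrt_sq (by norm_num)]]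
      rw [h2]
      exact Nat.le_ceil _
    have hBad : prW (matW (pseq α n) n) (BadSet n (tseq n))
        ≤ 2 * Real.sqrt (rhoseq α n) :=
      prW_BadSet_le_sqrt (pseq α n) n (tseq n) (rhoseq α n) hp0 hp1 h1 rfl h4
    have := key_lemma n hn1 (pseq α n) ((Real.log n)⁻¹) (tseq n) (useq α n)
      (2 * Real.sqrt (rhoseq α n)) hp0 hp1 hδ0 hu_mem htlam hAc hBad
    calc lo n = 1 - 2 * (Real.log n)⁻¹ - 2 * Real.sqrt (rhoseq α n) := rfl
      _ ≤ _ := this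
  exact tendsto_of_tendsto_of_tendsto_of_le_of_le' hlo_tendsto tendsto_const_nhds
    hlower (Filter.Eventually.of_forall hup)

end Final

end FourPoint

/-- **Four-point concentration of the chromatic number**: for `p = n^{-α}` with `α > 5/6`
fixed, there is `u = u(n,p)` such that almost surely `u ≤ χ(G(n,p)) ≤ u + 3`. -/
theorem chromatic_four_point_concentration (α : ℝ) (hα : 5 / 6 < α) :
    ∃ u : ℕ → ℕ,
      Filter.Tendsto
        (fun n : ℕ => gnp n ((n : ℝ) ^ (-α))
          {ω | u n ≤ (graphOf ω).chromaticNumber.toNat ∧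
            (graphOf ω).chromaticNumber.toNat ≤ u n + 3})
        Filter.atTop (nhds 1) := by
  refine ⟨FourPoint.useq α, ?_⟩
  have hα0 : 0 < α := by linarith
  have hmain := FourPoint.main_tendsto α hα
  have hofReal : Filter.Tendsto
      (fun n : ℕ => ENNReal.ofReal (FourPoint.prW (FourPoint.matW (FourPoint.pseq α n) n)
        {x | FourPoint.useq α n ≤ (FourPoint.Gr x).chromaticNumber.toNat ∧
          (FourPoint.Gr x).chromaticNumber.toNat ≤ FourPoint.useq α n + 3}))
      Filter.atTop (nhds 1) := by
    have h1 := (ENNReal.continuous_ofReal.tendsto 1).comp hmain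
    rw [ENNReal.ofReal_one] at h1; exact h1
  refine hofReal.congr ?_
  intro n
  rw [FourPoint.gnp_eq_prW ((n:ℝ) ^ (-α)) n (FourPoint.pseq_nonneg α n)
    (FourPoint.pseq_le_one α hα0 n)]
  rfl
end

section
/- Let Ω be a finite set, R a random subset with each element r included independently with probability p_r, and {A_i}_{i∈I} a finite family of subsets of Ω with B_i the event A_i ⊆ R. Write i ~ j if i ≠ j and A_i ∩ A_j ≠ ∅; let Δ = Σ_{i~j} Pr[B_i ∧ B_j], M = Π_i Pr[¬B_i], and assume Pr[B_i] ≤ ε for all i. Then M ≤ Pr[⋀_i ¬B_i] ≤ M·exp(Δ/(2(1-ε))). -/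
open MeasureTheory
open scoped Classical

section Discrete

variable {Γ : Type*} [Fintype Γ]

/-- The weight of a configuration under the product Bernoulli measure. -/
noncomputable def jW (p : Γ → ℝ) (ω : Γ → Bool) : ℝ :=
  ∏ r, (if ω r then p r else 1 - p r)

/-- Discrete probability of a finite event. -/
noncomputable def jP (p : Γ → ℝ) (S : Finset (Γ → Bool)) : ℝ := ∑ ω ∈ S, jW p ω

variable {p : Γ → ℝ}

lemma jW_nonneg (hp0 : ∀ r, 0 ≤ p r) (hp1 : ∀ r, p r ≤ 1) (ω : Γ → Bool) :
    0 ≤ jW p ω := by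
  refine Finset.prod_nonneg fun r _ => ?_
  cases h : ω r <;> simp [h, hp0 r, sub_nonneg.2 (hp1 r)]

lemma jW_mass : ∑ ω : Γ → Bool, jW p ω = 1 := by
  classical
  have h := Fintype.prod_sum (fun (r : Γ) (b : Bool) => if b then p r else 1 - p r)
  have h2 : ∑ ω : Γ → Bool, jW p ω =
      ∏ r : Γ, ∑ b : Bool, (if b then p r else 1 - p r) := h.symm
  rw [h2]
  have : ∀ r : Γ, (∑ b : Bool, (if b then p r else 1 - p r)) = 1 := by
    intro r
    rw [Fintype.sum_bool]
    simp
  rw [Finset.prod_congr rfl fun r _ => this r]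
  simp

lemma jW_inf_sup (a b : Γ → Bool) : jW p (a ⊓ b) * jW p (a ⊔ b) = jW p a * jW p b := by
  unfold jW
  rw [← Finset.prod_mul_distrib, ← Finset.prod_mul_distrib]
  refine Finset.prod_congr rfl fun r _ => ?_
  have hinf : (a ⊓ b) r = (a r && b r) := congrFun (congrFun Bool.inf_eq_band (a r)) (b r)
  have hsup : (a ⊔ b) r = (a r || b r) := congrFun (congrFun Bool.sup_eq_bor (a r)) (b r)
  rw [hinf, hsup]
  cases ha : a r <;> cases hb : b r <;> simp [mul_comm]

lemma jP_nonneg (hp0 : ∀ r, 0 ≤ p r) (hp1 : ∀ r, p r ≤ 1) (S : Finset (Γ → Bool)) :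
    0 ≤ jP p S :=
  Finset.sum_nonneg fun ω _ => jW_nonneg hp0 hp1 ω

lemma jP_univ : jP p (Finset.univ) = 1 := jW_mass

lemma jP_mono (hp0 : ∀ r, 0 ≤ p r) (hp1 : ∀ r, p r ≤ 1) {S T : Finset (Γ → Bool)}
    (h : S ⊆ T) : jP p S ≤ jP p T :=
  Finset.sum_le_sum_of_subset_of_nonneg h fun ω _ _ => jW_nonneg hp0 hp1 ω

lemma jP_le_one (hp0 : ∀ r, 0 ≤ p r) (hp1 : ∀ r, p r ≤ 1) (S : Finset (Γ → Bool)) :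
    jP p S ≤ 1 := by
  simpa [jP_univ] using jP_mono hp0 hp1 (Finset.subset_univ S)

lemma jP_sdiff {S T : Finset (Γ → Bool)} (h : S ⊆ T) :
    jP p (T \ S) = jP p T - jP p S :=
  Finset.sum_sdiff_eq_sub h

lemma jP_union_inter (S T : Finset (Γ → Bool)) :
    jP p (S ∪ T) + jP p (S ∩ T) = jP p S + jP p T := by
  classical
  have h1 : S ∪ T = S ∪ (T \ S) := by
    ext ω; simp only [Finset.mem_union, Finset.mem_sdiff]; tauto
  have h2 : Disjoint S (T \ S) := Finset.disjoint_sdiff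
  have h3 : T \ S = T \ (T ∩ S) := by
    ext ω; simp only [Finset.mem_sdiff, Finset.mem_inter]; tauto
  have h4 : jP p (T \ (T ∩ S)) = jP p T - jP p (T ∩ S) :=
    jP_sdiff Finset.inter_subset_left
  have h5 : T ∩ S = S ∩ T := Finset.inter_comm T S
  have : jP p (S ∪ T) = jP p S + jP p (T \ S) := by
    rw [h1]; exact Finset.sum_union h2
  rw [this, h3, h4, h5]; ring

lemma jP_biUnion_le {κ : Type*} (hp0 : ∀ r, 0 ≤ p r)
    (hp1 : ∀ r, p r ≤ 1) (D : Finset κ) (f : κ → Finset (Γ → Bool)) :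
    jP p (D.biUnion f) ≤ ∑ j ∈ D, jP p (f j) := by
  induction D using Finset.induction with
  | empty => simp [jP]
  | insert _ _ hj ih =>
    rename_i a D'
    rw [Finset.biUnion_insert, Finset.sum_insert hj]
    have h := jP_union_inter (p := p) (f a) (D'.biUnion f)
    have h2 : 0 ≤ jP p (f a ∩ D'.biUnion f) := jP_nonneg hp0 hp1 _
    linarith

/-- Indicator of a finite event. -/
noncomputable def jInd (S : Finset (Γ → Bool)) : (Γ → Bool) → ℝ :=
  fun ω => if ω ∈ S then 1 else 0

lemma jInd_nonneg (S : Finset (Γ → Bool)) : (0 : (Γ → Bool) → ℝ) ≤ jInd S :=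
  Pi.le_def.2 fun ω => by unfold jInd; positivity

lemma jInd_monotone {S : Finset (Γ → Bool)}
    (hS : ∀ ⦃ω ω' : Γ → Bool⦄, ω ∈ S → ω ≤ ω' → ω' ∈ S) : Monotone (jInd S) := by
  intro a b hab
  unfold jInd
  by_cases ha : a ∈ S
  · simp [ha, hS ha hab]
  · rw [if_neg ha]
    split <;> norm_num

lemma jP_eq_sum_ind (S : Finset (Γ → Bool)) :
    jP p S = ∑ ω, jW p ω * jInd S ω := by
  unfold jP jInd
  have h : ∀ ω, jW p ω * (if ω ∈ S then (1:ℝ) else 0) = if ω ∈ S then jW p ω else 0 := by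
    intro ω; split <;> simp
  rw [Finset.sum_congr rfl fun ω _ => h ω, Finset.sum_ite_mem, Finset.univ_inter]

lemma harris_up (hp0 : ∀ r, 0 ≤ p r) (hp1 : ∀ r, p r ≤ 1) {S T : Finset (Γ → Bool)}
    (hS : ∀ ⦃ω ω' : Γ → Bool⦄, ω ∈ S → ω ≤ ω' → ω' ∈ S)
    (hT : ∀ ⦃ω ω' : Γ → Bool⦄, ω ∈ T → ω ≤ ω' → ω' ∈ T) :
    jP p S * jP p T ≤ jP p (S ∩ T) := by
  classical
  have h := fkg (f := jInd S) (g := jInd T) (μ := jW p)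
    (Pi.le_def.2 fun ω => jW_nonneg hp0 hp1 ω) (jInd_nonneg S) (jInd_nonneg T)
    (jInd_monotone hS) (jInd_monotone hT)
    (fun a b => (jW_inf_sup a b).ge)
  have hST : ∀ ω, jInd S ω * jInd T ω = jInd (S ∩ T) ω := by
    intro ω; unfold jInd
    by_cases h1 : ω ∈ S <;> by_cases h2 : ω ∈ T <;> simp [h1, h2]
  rw [← jP_eq_sum_ind, ← jP_eq_sum_ind] at h
  simp_rw [hST] at h
  rw [← jP_eq_sum_ind, jW_mass, one_mul] at h
  exact h

lemma harris_up_down (hp0 : ∀ r, 0 ≤ p r) (hp1 : ∀ r, p r ≤ 1) {S T : Finset (Γ → Bool)}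
    (hS : ∀ ⦃ω ω' : Γ → Bool⦄, ω ∈ S → ω ≤ ω' → ω' ∈ S)
    (hT : ∀ ⦃ω ω' : Γ → Bool⦄, ω ∈ T → ω' ≤ ω → ω' ∈ T) :
    jP p (S ∩ T) ≤ jP p S * jP p T := by
  classical
  have hTc : ∀ ⦃ω ω' : Γ → Bool⦄, ω ∈ Finset.univ \ T → ω ≤ ω' → ω' ∈ Finset.univ \ T := by
    intro ω ω' hω hle
    simp only [Finset.mem_sdiff, Finset.mem_univ, true_and] at hω ⊢
    exact fun h => hω (hT h hle)
  have h := harris_up hp0 hp1 hS hTc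
  have h1 : S ∩ (Finset.univ \ T) = S \ (S ∩ T) := by
    ext ω
    simp only [Finset.mem_inter, Finset.mem_sdiff, Finset.mem_univ, true_and]
    tauto
  have h2 : jP p (S \ (S ∩ T)) = jP p S - jP p (S ∩ T) :=
    jP_sdiff Finset.inter_subset_left
  have h3 : jP p (Finset.univ \ T) = 1 - jP p T := by
    rw [jP_sdiff (Finset.subset_univ T), jP_univ]
  rw [h1, h2, h3] at h
  nlinarith [jP_nonneg hp0 hp1 S, jP_nonneg hp0 hp1 T]

lemma harris_down_down (hp0 : ∀ r, 0 ≤ p r) (hp1 : ∀ r, p r ≤ 1) {S T : Finset (Γ → Bool)}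
    (hS : ∀ ⦃ω ω' : Γ → Bool⦄, ω ∈ S → ω' ≤ ω → ω' ∈ S)
    (hT : ∀ ⦃ω ω' : Γ → Bool⦄, ω ∈ T → ω' ≤ ω → ω' ∈ T) :
    jP p S * jP p T ≤ jP p (S ∩ T) := by
  classical
  have hSc : ∀ ⦃ω ω' : Γ → Bool⦄, ω ∈ Finset.univ \ S → ω ≤ ω' → ω' ∈ Finset.univ \ S := by
    intro ω ω' hω hle
    simp only [Finset.mem_sdiff, Finset.mem_univ, true_and] at hω ⊢
    exact fun h => hω (hS h hle)
  have hTc : ∀ ⦃ω ω' : Γ → Bool⦄, ω ∈ Finset.univ \ T → ω ≤ ω' → ω' ∈ Finset.univ \ T := by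
    intro ω ω' hω hle
    simp only [Finset.mem_sdiff, Finset.mem_univ, true_and] at hω ⊢
    exact fun h => hω (hT h hle)
  have h := harris_up hp0 hp1 hSc hTc
  have h1 : (Finset.univ \ S) ∩ (Finset.univ \ T) = Finset.univ \ (S ∪ T) := by
    ext ω
    simp only [Finset.mem_inter, Finset.mem_sdiff, Finset.mem_univ, true_and,
      Finset.mem_union]
    tauto
  have h2 : jP p (Finset.univ \ S) = 1 - jP p S := by
    rw [jP_sdiff (Finset.subset_univ S), jP_univ]
  have h3 : jP p (Finset.univ \ T) = 1 - jP p T := by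
    rw [jP_sdiff (Finset.subset_univ T), jP_univ]
  have h4 : jP p (Finset.univ \ (S ∪ T)) = 1 - jP p (S ∪ T) := by
    rw [jP_sdiff (Finset.subset_univ _), jP_univ]
  have h5 := jP_union_inter (p := p) S T
  rw [h1, h2, h3, h4] at h
  nlinarith

/-- Events depending on disjoint sets of coordinates multiply. -/
lemma split_sum (u : Finset Γ) (f g : (Γ → Bool) → ℝ)
    (hf : ∀ ω ω' : Γ → Bool, (∀ r ∈ u, ω r = ω' r) → f ω = f ω')
    (hg : ∀ ω ω' : Γ → Bool, (∀ r ∉ u, ω r = ω' r) → g ω = g ω') :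
    ∑ ω, jW p ω * (f ω * g ω) = (∑ ω, jW p ω * f ω) * (∑ ω, jW p ω * g ω) := by
  classical
  set e := (Equiv.piEquivPiSubtypeProd (fun r : Γ => r ∈ u) (fun _ => Bool)).symm with he
  have happ : ∀ (x : {r : Γ // r ∈ u} → Bool) (y : {r : Γ // ¬ r ∈ u} → Bool) (r : Γ),
      e (x, y) r = if h : r ∈ u then x ⟨r, h⟩ else y ⟨r, h⟩ := by
    intro x y r
    rw [he]
    rfl
  set Wu : ({r : Γ // r ∈ u} → Bool) → ℝ :=
    fun x => ∏ r : {r : Γ // r ∈ u}, (if x r then p r else 1 - p r) with hWu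
  set Wv : ({r : Γ // ¬ r ∈ u} → Bool) → ℝ :=
    fun y => ∏ r : {r : Γ // ¬ r ∈ u}, (if y r then p r else 1 - p r) with hWv
  have hW : ∀ x y, jW p (e (x, y)) = Wu x * Wv y := by
    intro x y
    unfold jW
    rw [← Fintype.prod_subtype_mul_prod_subtype (fun r => r ∈ u)
      (fun r => if e (x, y) r then p r else 1 - p r)]
    congr 1
    · refine Finset.prod_congr ?_ fun r _ => ?_
      · congr!
      · rw [happ, dif_pos r.2]
    · refine Finset.prod_congr ?_ fun r _ => ?_
      · congr!
      · rw [happ, dif_neg r.2]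
  set f' : ({r : Γ // r ∈ u} → Bool) → ℝ := fun x => f (e (x, fun _ => false)) with hf'
  set g' : ({r : Γ // ¬ r ∈ u} → Bool) → ℝ := fun y => g (e ((fun _ => false), y)) with hg'
  have hfx : ∀ x y, f (e (x, y)) = f' x := by
    intro x y
    refine hf _ _ fun r hr => ?_
    rw [happ, happ, dif_pos hr, dif_pos hr]
  have hgy : ∀ x y, g (e (x, y)) = g' y := by
    intro x y
    refine hg _ _ fun r hr => ?_
    rw [happ, happ, dif_neg hr, dif_neg hr]
  have hsum : ∀ F : (Γ → Bool) → ℝ, ∑ ω, F ω =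
      ∑ x : {r : Γ // r ∈ u} → Bool, ∑ y : {r : Γ // ¬ r ∈ u} → Bool, F (e (x, y)) := by
    intro F
    rw [← Equiv.sum_comp e F, Fintype.sum_prod_type]
  have e1 : ∑ ω, jW p ω * (f ω * g ω) = (∑ x, Wu x * f' x) * (∑ y, Wv y * g' y) := by
    rw [hsum, Finset.sum_mul_sum]
    refine Finset.sum_congr rfl fun x _ => Finset.sum_congr rfl fun y _ => ?_
    rw [hW, hfx x y, hgy x y]; ring
  have e2 : ∑ ω, jW p ω * f ω = (∑ x, Wu x * f' x) * (∑ y, Wv y) := by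
    rw [hsum, Finset.sum_mul_sum]
    refine Finset.sum_congr rfl fun x _ => Finset.sum_congr rfl fun y _ => ?_
    rw [hW, hfx x y]; ring
  have e3 : ∑ ω, jW p ω * g ω = (∑ x, Wu x) * (∑ y, Wv y * g' y) := by
    rw [hsum, Finset.sum_mul_sum]
    refine Finset.sum_congr rfl fun x _ => Finset.sum_congr rfl fun y _ => ?_
    rw [hW, hgy x y]; ring
  have e4 : (∑ x, Wu x) * (∑ y, Wv y) = 1 := by
    rw [← jW_mass (p := p), hsum, Finset.sum_mul_sum]
    refine (Finset.sum_congr rfl fun x _ => Finset.sum_congr rfl fun y _ => ?_).symm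
    rw [hW]
  rw [e1, e2, e3]
  calc (∑ x, Wu x * f' x) * (∑ y, Wv y * g' y)
      = (∑ x, Wu x * f' x) * (∑ y, Wv y * g' y) * ((∑ x, Wu x) * (∑ y, Wv y)) := by
        rw [e4, mul_one]
    _ = (∑ x, Wu x * f' x) * (∑ y, Wv y) * ((∑ x, Wu x) * (∑ y, Wv y * g' y)) := by ring

lemma jP_indep (hp0 : ∀ r, 0 ≤ p r) (hp1 : ∀ r, p r ≤ 1) (u : Finset Γ)
    (S T : Finset (Γ → Bool))
    (hS : ∀ ω ω' : Γ → Bool, (∀ r ∈ u, ω r = ω' r) → (ω ∈ S ↔ ω' ∈ S))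
    (hT : ∀ ω ω' : Γ → Bool, (∀ r ∉ u, ω r = ω' r) → (ω ∈ T ↔ ω' ∈ T)) :
    jP p (S ∩ T) = jP p S * jP p T := by
  classical
  have h := split_sum (p := p) u (jInd S) (jInd T)
    (fun ω ω' hh => by unfold jInd; rw [if_congr (hS ω ω' hh) rfl rfl])
    (fun ω ω' hh => by unfold jInd; rw [if_congr (hT ω ω' hh) rfl rfl])
  have hST : ∀ ω, jInd S ω * jInd T ω = jInd (S ∩ T) ω := by
    intro ω; unfold jInd
    by_cases h1 : ω ∈ S <;> by_cases h2 : ω ∈ T <;> simp [h1, h2]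
  simp_rw [hST] at h
  rw [← jP_eq_sum_ind, ← jP_eq_sum_ind, ← jP_eq_sum_ind] at h
  exact h

end Discrete

section Events

variable {Γ I : Type*} [Fintype Γ] [Fintype I]

/-- The event `A i ⊆ R` as a finset. -/
noncomputable def jB (A : I → Finset Γ) (i : I) : Finset (Γ → Bool) :=
  Finset.univ.filter fun ω => ∀ r ∈ A i, ω r = true

/-- The event that none of `B j`, `j ∈ s`, holds. -/
noncomputable def jC (A : I → Finset Γ) (s : Finset I) : Finset (Γ → Bool) :=
  Finset.univ.filter fun ω => ∀ j ∈ s, ω ∉ jB A j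

lemma mem_jB {A : I → Finset Γ} {i : I} {ω : Γ → Bool} :
    ω ∈ jB A i ↔ ∀ r ∈ A i, ω r = true := by simp [jB]

lemma mem_jC {A : I → Finset Γ} {s : Finset I} {ω : Γ → Bool} :
    ω ∈ jC A s ↔ ∀ j ∈ s, ω ∉ jB A j := by simp only [jC, Finset.mem_filter,
      Finset.mem_univ, true_and]

lemma jB_upper {A : I → Finset Γ} {i : I} :
    ∀ ⦃ω ω' : Γ → Bool⦄, ω ∈ jB A i → ω ≤ ω' → ω' ∈ jB A i := by
  intro ω ω' hω hle
  rw [mem_jB] at hω ⊢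
  intro r hr
  exact Bool.le_iff_imp.1 (hle r) (hω r hr)

lemma jB_inter_upper {A : I → Finset Γ} {i j : I} :
    ∀ ⦃ω ω' : Γ → Bool⦄, ω ∈ jB A i ∩ jB A j → ω ≤ ω' → ω' ∈ jB A i ∩ jB A j := by
  intro ω ω' hω hle
  rw [Finset.mem_inter] at hω ⊢
  exact ⟨jB_upper hω.1 hle, jB_upper hω.2 hle⟩

lemma jC_lower {A : I → Finset Γ} {s : Finset I} :
    ∀ ⦃ω ω' : Γ → Bool⦄, ω ∈ jC A s → ω' ≤ ω → ω' ∈ jC A s := by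
  intro ω ω' hω hle
  rw [mem_jC] at hω ⊢
  intro j hj hmem
  exact hω j hj (jB_upper hmem hle)

lemma jC_anti {A : I → Finset Γ} {s t : Finset I} (h : s ⊆ t) : jC A t ⊆ jC A s := by
  intro ω hω
  rw [mem_jC] at hω ⊢
  exact fun j hj => hω j (h hj)

lemma jC_insert {A : I → Finset Γ} {i : I} {s : Finset I} :
    jC A (insert i s) = jC A s \ jB A i := by
  ext ω
  simp only [mem_jC, Finset.mem_sdiff, Finset.mem_insert]
  constructor
  · intro h; exact ⟨fun j hj => h j (Or.inr hj), h i (Or.inl rfl)⟩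
  · rintro ⟨h1, h2⟩ j (rfl | hj)
    · exact h2
    · exact h1 j hj

end Events

section Janson

variable {Γ I : Type*} [Fintype Γ] [Fintype I] {p : Γ → ℝ}

/-- The pair-correlation sum over a finset of indices. -/
noncomputable def jΔ (p : Γ → ℝ) (A : I → Finset Γ) (s : Finset I) : ℝ :=
  ∑ q ∈ s ×ˢ s, if q.1 ≠ q.2 ∧ (A q.1 ∩ A q.2).Nonempty
    then jP p (jB A q.1 ∩ jB A q.2) else 0

lemma jΔ_nonneg (hp0 : ∀ r, 0 ≤ p r) (hp1 : ∀ r, p r ≤ 1) (A : I → Finset Γ)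
    (s : Finset I) : 0 ≤ jΔ p A s := by
  refine Finset.sum_nonneg fun q _ => ?_
  split
  · exact jP_nonneg hp0 hp1 _
  · exact le_refl 0

lemma janson_lower (hp0 : ∀ r, 0 ≤ p r) (hp1 : ∀ r, p r ≤ 1) (A : I → Finset Γ)
    (s : Finset I) : ∏ i ∈ s, (1 - jP p (jB A i)) ≤ jP p (jC A s) := by
  classical
  induction s using Finset.induction with
  | empty =>
    have : jC A (∅ : Finset I) = Finset.univ := by
      ext ω; simp [mem_jC]
    simp [this, jP_univ]
  | insert _ _ hi ih =>
    rename_i i s'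
    rw [Finset.prod_insert hi, jC_insert]
    have hd : jC A s' \ jB A i = (Finset.univ \ jB A i) ∩ jC A s' := by
      ext ω
      simp only [Finset.mem_inter, Finset.mem_sdiff, Finset.mem_univ, true_and]
      tauto
    rw [hd]
    have hBc : ∀ ⦃ω ω' : Γ → Bool⦄, ω ∈ Finset.univ \ jB A i → ω' ≤ ω →
        ω' ∈ Finset.univ \ jB A i := by
      intro ω ω' hω hle
      simp only [Finset.mem_sdiff, Finset.mem_univ, true_and] at hω ⊢
      exact fun h => hω (jB_upper h hle)
    have h := harris_down_down hp0 hp1 hBc (jC_lower (A := A) (s := s'))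
    have h2 : jP p (Finset.univ \ jB A i) = 1 - jP p (jB A i) := by
      rw [jP_sdiff (Finset.subset_univ _), jP_univ]
    rw [h2] at h
    refine le_trans ?_ h
    have hb1 : jP p (jB A i) ≤ 1 := jP_le_one hp0 hp1 _
    exact mul_le_mul_of_nonneg_left ih (by linarith)

lemma janson_upper (hp0 : ∀ r, 0 ≤ p r) (hp1 : ∀ r, p r ≤ 1) (A : I → Finset Γ)
    {ε : ℝ} (hε0 : 0 ≤ ε) (hε1 : ε < 1) (hb : ∀ i, jP p (jB A i) ≤ ε) (s : Finset I) :
    jP p (jC A s) ≤ (∏ i ∈ s, (1 - jP p (jB A i))) *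
      Real.exp (jΔ p A s / (2 * (1 - ε))) := by
  classical
  induction s using Finset.induction with
  | empty =>
    have : jC A (∅ : Finset I) = Finset.univ := by ext ω; simp [mem_jC]
    simp [this, jP_univ, jΔ]
  | insert _ _ hi ih =>
    rename_i i s'
    set b := jP p (jB A i) with hbdef
    set D := s'.filter (fun j => (A i ∩ A j).Nonempty) with hD
    set N := s' \ D with hN
    set t := ∑ j ∈ D, jP p (jB A i ∩ jB A j) with ht
    have ht0 : 0 ≤ t := Finset.sum_nonneg fun j _ => jP_nonneg hp0 hp1 _
    have hb0 : 0 ≤ b := jP_nonneg hp0 hp1 _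
    have hbe : b ≤ ε := hb i
    have hNs : N ⊆ s' := Finset.sdiff_subset
    have hCsub : jC A s' ⊆ jC A N := jC_anti hNs
    -- independence
    have hk1 : jP p (jB A i ∩ jC A N) = b * jP p (jC A N) := by
      refine jP_indep hp0 hp1 (A i) _ _ ?_ ?_
      · intro ω ω' hh
        rw [mem_jB, mem_jB]
        constructor <;> intro h r hr
        · rw [← hh r hr]; exact h r hr
        · rw [hh r hr]; exact h r hr
      · intro ω ω' hh
        rw [mem_jC, mem_jC]
        have key : ∀ j ∈ N, (ω ∈ jB A j ↔ ω' ∈ jB A j) := by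
          intro j hj
          have hdisj : ¬(A i ∩ A j).Nonempty := by
            rw [hN, Finset.mem_sdiff, hD] at hj
            intro hne
            exact hj.2 (Finset.mem_filter.2 ⟨hj.1, hne⟩)
          have hout : ∀ r ∈ A j, r ∉ A i := by
            intro r hrj hri
            exact hdisj ⟨r, Finset.mem_inter.2 ⟨hri, hrj⟩⟩
          rw [mem_jB, mem_jB]
          constructor <;> intro h r hr
          · rw [← hh r (hout r hr)]; exact h r hr
          · rw [hh r (hout r hr)]; exact h r hr
        constructor <;> intro h j hj
        · rw [← key j hj]; exact h j hj
        · rw [key j hj]; exact h j hj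
    -- the bad part is covered by pair events
    have hsub : (jB A i ∩ jC A N) \ (jB A i ∩ jC A s') ⊆
        D.biUnion (fun j => (jB A i ∩ jB A j) ∩ jC A N) := by
      intro ω hω
      rw [Finset.mem_sdiff, Finset.mem_inter] at hω
      obtain ⟨⟨hωB, hωN⟩, hω2⟩ := hω
      have : ¬ ω ∈ jC A s' := fun h => hω2 (Finset.mem_inter.2 ⟨hωB, h⟩)
      rw [mem_jC] at this
      push_neg at this
      obtain ⟨j, hjs, hjB⟩ := this
      have hjD : j ∈ D := by
        by_contra hjD
        have hjN : j ∈ N := Finset.mem_sdiff.2 ⟨hjs, hjD⟩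
        exact (mem_jC.1 hωN) j hjN hjB
      exact Finset.mem_biUnion.2 ⟨j, hjD,
        Finset.mem_inter.2 ⟨Finset.mem_inter.2 ⟨hωB, hjB⟩, hωN⟩⟩
    have hsubset2 : jB A i ∩ jC A s' ⊆ jB A i ∩ jC A N :=
      fun ω hω => Finset.mem_inter.2 ⟨(Finset.mem_inter.1 hω).1,
        hCsub (Finset.mem_inter.1 hω).2⟩
    have hk2 : jP p ((jB A i ∩ jC A N) \ (jB A i ∩ jC A s')) ≤ t * jP p (jC A N) := by
      refine le_trans (jP_mono hp0 hp1 hsub) ?_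
      refine le_trans (jP_biUnion_le hp0 hp1 D _) ?_
      rw [ht, Finset.sum_mul]
      refine Finset.sum_le_sum fun j hj => ?_
      exact harris_up_down hp0 hp1 jB_inter_upper (jC_lower (A := A) (s := N))
    have hdiffP : jP p ((jB A i ∩ jC A N) \ (jB A i ∩ jC A s')) =
        jP p (jB A i ∩ jC A N) - jP p (jB A i ∩ jC A s') := jP_sdiff hsubset2
    have hk3 : (b - t) * jP p (jC A N) ≤ jP p (jB A i ∩ jC A s') := by
      rw [hdiffP, hk1] at hk2
      linarith
    have hk4 : (b - t) * jP p (jC A s') ≤ jP p (jB A i ∩ jC A s') := by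
      rcases le_or_gt 0 (b - t) with h | h
      · refine le_trans ?_ hk3
        exact mul_le_mul_of_nonneg_left (jP_mono hp0 hp1 hCsub) h
      · refine le_trans ?_ (jP_nonneg hp0 hp1 _)
        exact mul_nonpos_of_nonpos_of_nonneg h.le (jP_nonneg hp0 hp1 _)
    have hk5 : jP p (jC A (insert i s')) ≤ (1 - b + t) * jP p (jC A s') := by
      rw [jC_insert]
      have hid : jC A s' \ jB A i = jC A s' \ (jB A i ∩ jC A s') := by
        ext ω
        simp only [Finset.mem_sdiff, Finset.mem_inter]
        tauto
      rw [hid, jP_sdiff Finset.inter_subset_right]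
      linarith
    have h1ε : 0 < 1 - ε := by linarith
    have hk7 : 1 - b + t ≤ (1 - b) * Real.exp (t / (1 - ε)) := by
      have h1b : 0 < 1 - b := by linarith
      have e1 : 1 + t / (1 - ε) ≤ Real.exp (t / (1 - ε)) := by
        have := Real.add_one_le_exp (t / (1 - ε))
        linarith
      have hu0 : 0 ≤ t / (1 - ε) := div_nonneg ht0 h1ε.le
      have htu : t / (1 - ε) * (1 - ε) = t := div_mul_cancel₀ t h1ε.ne'
      have e2 : 1 - b + t ≤ (1 - b) * (1 + t / (1 - ε)) := by
        nlinarith [mul_nonneg (sub_nonneg.2 hbe) hu0, htu]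
      refine le_trans e2 ?_
      exact mul_le_mul_of_nonneg_left e1 h1b.le
    -- pair sum identity
    have hk8 : jΔ p A (insert i s') = jΔ p A s' + 2 * t := by
      unfold jΔ
      simp only [Finset.sum_product]
      rw [Finset.sum_insert hi]
      have inner1 : ∑ y ∈ insert i s', (if i ≠ y ∧ (A i ∩ A y).Nonempty
          then jP p (jB A i ∩ jB A y) else 0) = t := by
        rw [Finset.sum_insert hi]
        have : (if i ≠ i ∧ (A i ∩ A i).Nonempty then jP p (jB A i ∩ jB A i) else 0) = 0 := by
          simp
        rw [this, zero_add, ht]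
        rw [Finset.sum_filter]
        refine Finset.sum_congr rfl fun y hy => ?_
        have hiy : i ≠ y := fun h => hi (h ▸ hy)
        simp [hiy]
      have inner2 : ∀ x ∈ s', ∑ y ∈ insert i s', (if x ≠ y ∧ (A x ∩ A y).Nonempty
          then jP p (jB A x ∩ jB A y) else 0) =
          (if (A i ∩ A x).Nonempty then jP p (jB A i ∩ jB A x) else 0) +
          ∑ y ∈ s', (if x ≠ y ∧ (A x ∩ A y).Nonempty then jP p (jB A x ∩ jB A y) else 0) := by
        intro x hx
        rw [Finset.sum_insert hi]
        congr 1
        have hxi : x ≠ i := fun h => hi (h ▸ hx)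
        have hAcomm : (A x ∩ A i).Nonempty ↔ (A i ∩ A x).Nonempty := by
          rw [Finset.inter_comm]
        have hBcomm : jB A x ∩ jB A i = jB A i ∩ jB A x := Finset.inter_comm _ _
        by_cases hne : (A i ∩ A x).Nonempty
        · rw [if_pos ⟨hxi, hAcomm.2 hne⟩, if_pos hne, hBcomm]
        · rw [if_neg (fun hcon => hne (hAcomm.1 hcon.2)), if_neg hne]
      rw [Finset.sum_congr rfl inner2, Finset.sum_add_distrib, inner1]
      have : ∑ x ∈ s', (if (A i ∩ A x).Nonempty then jP p (jB A i ∩ jB A x) else 0) = t := by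
        rw [ht, Finset.sum_filter]
      rw [this]
      ring
    -- combine
    have hC0 : 0 ≤ jP p (jC A s') := jP_nonneg hp0 hp1 _
    have hprod0 : 0 ≤ ∏ j ∈ s', (1 - jP p (jB A j)) :=
      Finset.prod_nonneg fun j _ => by have := hb j; linarith
    have hexp0 : (0:ℝ) < Real.exp (jΔ p A s' / (2 * (1 - ε))) := Real.exp_pos _
    have step1 : jP p (jC A (insert i s')) ≤
        (1 - b) * Real.exp (t / (1 - ε)) * jP p (jC A s') := by
      refine le_trans hk5 ?_
      exact mul_le_mul_of_nonneg_right hk7 hC0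
    have step2 : (1 - b) * Real.exp (t / (1 - ε)) * jP p (jC A s') ≤
        (1 - b) * Real.exp (t / (1 - ε)) *
          ((∏ j ∈ s', (1 - jP p (jB A j))) * Real.exp (jΔ p A s' / (2 * (1 - ε)))) := by
      refine mul_le_mul_of_nonneg_left ih ?_
      have h1b : 0 ≤ 1 - b := by linarith
      positivity
    refine le_trans step1 (le_trans step2 ?_)
    rw [Finset.prod_insert hi, hk8, ← hbdef]
    have hexp : Real.exp (t / (1 - ε)) * Real.exp (jΔ p A s' / (2 * (1 - ε))) =
        Real.exp ((jΔ p A s' + 2 * t) / (2 * (1 - ε))) := by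
      rw [← Real.exp_add]
      congr 1
      field_simp
      ring
    refine le_of_eq ?_
    rw [← hexp]
    ring

end Janson

section Bridge

instance bernoulli_isFiniteMeasure (x : ℝ) : IsFiniteMeasure (bernoulliMeasure x) := by
  refine ⟨?_⟩
  have h : bernoulliMeasure x Set.univ = ENNReal.ofReal x + ENNReal.ofReal (1 - x) := by
    simp [bernoulliMeasure]
  rw [h]
  exact ENNReal.add_lt_top.2 ⟨ENNReal.ofReal_lt_top, ENNReal.ofReal_lt_top⟩

lemma bernoulli_singleton (x : ℝ) (b : Bool) :
    bernoulliMeasure x {b} = ENNReal.ofReal (if b then x else 1 - x) := by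
  rw [bernoulliMeasure]
  cases b <;>
    simp [Measure.dirac_apply, Set.indicator, Measure.smul_apply]

variable {Γ : Type*} [Fintype Γ]

lemma pi_singleton (p : Γ → ℝ) (hp0 : ∀ r, 0 ≤ p r) (hp1 : ∀ r, p r ≤ 1) (ω : Γ → Bool) :
    Measure.pi (fun r => bernoulliMeasure (p r)) {ω} = ENNReal.ofReal (jW p ω) := by
  rw [← Set.univ_pi_singleton ω, Measure.pi_pi]
  have : ∀ r, bernoulliMeasure (p r) {ω r} =
      ENNReal.ofReal (if ω r then p r else 1 - p r) := fun r => bernoulli_singleton _ _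
  rw [Finset.prod_congr rfl fun r _ => this r, jW,
    ← ENNReal.ofReal_prod_of_nonneg]
  intro r _
  cases h : ω r <;> simp [h, hp0 r, sub_nonneg.2 (hp1 r)]

lemma pi_coe_finset (p : Γ → ℝ) (hp0 : ∀ r, 0 ≤ p r) (hp1 : ∀ r, p r ≤ 1)
    (F : Finset (Γ → Bool)) :
    Measure.pi (fun r => bernoulliMeasure (p r)) ↑F = ENNReal.ofReal (jP p F) := by
  classical
  have hcoe : (↑F : Set (Γ → Bool)) = ⋃ ω ∈ F, ({ω} : Set (Γ → Bool)) := by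
    ext x; simp
  rw [hcoe, measure_biUnion_finset ?_ ?_]
  · rw [Finset.sum_congr rfl fun ω _ => pi_singleton p hp0 hp1 ω, jP,
      ← ENNReal.ofReal_sum_of_nonneg]
    intro ω _
    exact jW_nonneg hp0 hp1 ω
  · intro a _ b _ hab
    simp [Set.disjoint_singleton, hab]
  · intro ω _
    exact measurableSet_singleton ω

end Bridge

/-- **Janson's inequality**: for a random subset `R` of a finite set `Γ` with independent
inclusion probabilities `p r`, events `Bᵢ = {Aᵢ ⊆ R}`, dependency `i ~ j ↔ i ≠ j ∧ Aᵢ ∩ Aⱼ ≠ ∅`,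
`Δ = Σ_{i~j} Pr[Bᵢ ∧ Bⱼ]`, `M = Π_i Pr[¬Bᵢ]`, and `Pr[Bᵢ] ≤ ε` for all `i`, we have
`M ≤ Pr[⋀ᵢ ¬Bᵢ] ≤ M·exp(Δ/(2(1-ε)))`. -/
theorem janson_inequality {Γ I : Type*} [Fintype Γ] [Fintype I] (p : Γ → ℝ)
    (hp0 : ∀ r, 0 ≤ p r) (hp1 : ∀ r, p r ≤ 1) (A : I → Finset Γ) (ε : ℝ) (hε : ε < 1)
    (μ : Measure (Γ → Bool)) (hμ : μ = Measure.pi fun r => bernoulliMeasure (p r))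
    (B : I → Set (Γ → Bool)) (hB : ∀ i, B i = {ω | ∀ r ∈ A i, ω r = true})
    (hεbound : ∀ i, μ (B i) ≤ ENNReal.ofReal ε)
    (Δ M : ℝ)
    (hΔ : Δ = ∑ q : I × I, if q.1 ≠ q.2 ∧ (A q.1 ∩ A q.2).Nonempty
      then (μ (B q.1 ∩ B q.2)).toReal else 0)
    (hM : M = ∏ i, (μ (B i)ᶜ).toReal) :
    ENNReal.ofReal M ≤ μ (⋂ i, (B i)ᶜ) ∧
      μ (⋂ i, (B i)ᶜ) ≤ ENNReal.ofReal (M * Real.exp (Δ / (2 * (1 - ε)))) := by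
  classical
  subst hμ
  set ν := Measure.pi fun r => bernoulliMeasure (p r) with hν
  -- set-to-finset translations
  have hBf : ∀ i, B i = ↑(jB A i) := by
    intro i; ext ω; simp [hB, jB]
  have hBc : ∀ i, (B i)ᶜ = ↑(Finset.univ \ jB A i) := by
    intro i; rw [hBf i]; ext ω; simp
  have hInter : (⋂ i, (B i)ᶜ) = ↑(jC A Finset.univ) := by
    ext ω
    simp only [Set.mem_iInter, Set.mem_compl_iff, hBf, Finset.mem_coe, mem_jC,
      Finset.mem_univ, true_implies]
  have hPair : ∀ i j : I, B i ∩ B j = ↑(jB A i ∩ jB A j) := by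
    intro i j; rw [hBf i, hBf j]; rw [Finset.coe_inter]
  -- probabilities
  have hBP : ∀ i, ν (B i) = ENNReal.ofReal (jP p (jB A i)) := by
    intro i; rw [hBf i]; exact pi_coe_finset p hp0 hp1 _
  have hb0 : ∀ i, 0 ≤ jP p (jB A i) := fun i => jP_nonneg hp0 hp1 _
  have hb1 : ∀ i, jP p (jB A i) ≤ 1 := fun i => jP_le_one hp0 hp1 _
  have hBcP : ∀ i, ν (B i)ᶜ = ENNReal.ofReal (1 - jP p (jB A i)) := by
    intro i
    rw [hBc i, pi_coe_finset p hp0 hp1, jP_sdiff (Finset.subset_univ _), jP_univ]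
  have hMeq : M = ∏ i, (1 - jP p (jB A i)) := by
    rw [hM]
    refine Finset.prod_congr rfl fun i _ => ?_
    rw [hBcP i, ENNReal.toReal_ofReal (by have := hb1 i; linarith)]
  have hΔeq : Δ = jΔ p A Finset.univ := by
    rw [hΔ]
    unfold jΔ
    rw [← Finset.univ_product_univ]
    refine Finset.sum_congr rfl fun q _ => ?_
    split
    · rw [hPair q.1 q.2, pi_coe_finset p hp0 hp1,
        ENNReal.toReal_ofReal (jP_nonneg hp0 hp1 _)]
    · rfl
  have hCP : ν (⋂ i, (B i)ᶜ) = ENNReal.ofReal (jP p (jC A Finset.univ)) := by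
    rw [hInter]; exact pi_coe_finset p hp0 hp1 _
  constructor
  · -- lower bound
    rw [hCP, hMeq]
    exact ENNReal.ofReal_le_ofReal (janson_lower hp0 hp1 A Finset.univ)
  · -- upper bound
    rw [hCP]
    refine ENNReal.ofReal_le_ofReal ?_
    rcases le_or_gt 0 ε with h0 | h0
    · have hbε : ∀ i, jP p (jB A i) ≤ ε := by
        intro i
        have := hεbound i
        rw [hBP i] at this
        exact (ENNReal.ofReal_le_ofReal_iff h0).1 this
      have := janson_upper hp0 hp1 A h0 hε hbε Finset.univ
      rw [hMeq, hΔeq]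
      exact this
    · -- ε < 0 : all events are null
      have hbz : ∀ i, jP p (jB A i) = 0 := by
        intro i
        have h1 := hεbound i
        rw [hBP i, ENNReal.ofReal_eq_zero.2 h0.le, nonpos_iff_eq_zero,
          ENNReal.ofReal_eq_zero] at h1
        exact le_antisymm h1 (hb0 i)
      have hΔz : Δ = 0 := by
        rw [hΔeq]
        unfold jΔ
        refine Finset.sum_eq_zero fun q _ => ?_
        split
        · refine le_antisymm ?_ (jP_nonneg hp0 hp1 _)
          calc jP p (jB A q.1 ∩ jB A q.2) ≤ jP p (jB A q.1) :=
                jP_mono hp0 hp1 Finset.inter_subset_left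
            _ = 0 := hbz q.1
        · rfl
      have hupper := janson_upper hp0 hp1 A le_rfl one_pos
        (fun i => (hbz i).le) Finset.univ
      have hΔz2 : jΔ p A Finset.univ = 0 := by rw [← hΔeq]; exact hΔz
      rw [hΔz2] at hupper
      rw [hMeq, hΔz]
      simpa using hupper
end
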